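/- arXiv:1908.03672 — 8 statements merged into one kernel-verified Lean document; each statement's English description precedes it below -/
import Mathlib

section
/- Define $Z_n^W: W^n \to \mathbb{Z}[\mathcal{D}]$ by $Z_n^W(x_1,\ldots,x_n) = \sum_{D \in \mathcal{D}} \left( \prod_{i=0}^{n-1} (v_D(C_i) - v_D(C_{i+1})) \right) [D]$, where $C_i = x_1 \cdots x_i C_0$. Then $Z_n^W$ is an $n$-cocycle for the group cohomology of $W$ with coefficients in $\mathbb{Z}[\mathcal{D}]$: for all $x_1, \ldots, x_{n+1} \in W$, $x_1 Z_n(x_2,\ldots,x_{n+1}) + \sum_{j=1}^n (-1)^j Z_n(x_1,\ldots,x_j x_{j+1},\ldots,x_{n+1}) + (-1)^{n+1} Z_n(x_1,\ldots,x_n) = 0$. -/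
open CoxeterSystem

variable {B W : Type*} [Group W] {M : CoxeterMatrix B}

namespace ZAux
open Classical

section Generic
variable {G : Type*} [Group G] {b c : G}

lemma gswap (hb : b * b = 1) (hbc : b * c = c⁻¹ * b) (k : ℕ) :
    b * c ^ k = (c⁻¹) ^ k * b := by
  induction k with
  | zero => simp
  | succ k ih =>
    rw [pow_succ', ← mul_assoc, hbc, mul_assoc, ih, ← mul_assoc, ← pow_succ']

lemma gA (hb : b * b = 1) (hbc : b * c = c⁻¹ * b) (k : ℕ) :
    (c⁻¹) ^ k * b * c ^ k = (c⁻¹) ^ (2 * k) * b := by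
  rw [two_mul, mul_assoc, gswap hb hbc, ← mul_assoc, ← pow_add]

lemma ge1 (hb : b * b = 1) (hbc : b * c = c⁻¹ * b) (k : ℕ) (x : G) :
    (c ^ k * x * (c⁻¹) ^ k = b) ↔ x = (c⁻¹) ^ (2 * k) * b := by
  constructor
  · intro h
    have hx : x = (c⁻¹) ^ k * (c ^ k * x * (c⁻¹) ^ k) * c ^ k := by group
    rw [hx, h, gA hb hbc]
  · intro h
    rw [h, ← gA hb hbc]
    group

lemma gB (hb : b * b = 1) (hbc : b * c = c⁻¹ * b) (k : ℕ) :
    (c⁻¹) ^ k * (b * c ^ (k + 1)) = (c⁻¹) ^ (2 * k + 1) * b := by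
  rw [gswap hb hbc, ← mul_assoc, ← pow_add]
  have : k + (k + 1) = 2 * k + 1 := by omega
  rw [this]

lemma ge2 (hb : b * b = 1) (hbc : b * c = c⁻¹ * b) (k : ℕ) (x : G) :
    (b * (c ^ k * x * (c⁻¹) ^ k) * b = c * b) ↔ x = (c⁻¹) ^ (2 * k + 1) * b := by
  have hbinv : b⁻¹ = b := inv_eq_of_mul_eq_one_right hb
  constructor
  · intro h
    have hx : x = (c⁻¹) ^ k * (b⁻¹ * ((b * (c ^ k * x * (c⁻¹) ^ k) * b) * (b⁻¹ * c ^ k))) := by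
      group
    rw [hx, h, hbinv]
    rw [show (b : G) * ((c * b) * (b * c ^ k)) = b * (c * ((b * b) * c ^ k)) from by group,
      hb, one_mul, ← pow_succ']
    exact gB hb hbc k
  · intro h
    rw [h, ← gB hb hbc]
    rw [show (b : G) * (c ^ k * ((c⁻¹) ^ k * (b * c ^ (k + 1))) * (c⁻¹) ^ k) * b
        = (b * b) * (c ^ (k + 1) * (c⁻¹) ^ k) * b from by group, hb, one_mul]
    rw [show (c : G) ^ (k + 1) * (c⁻¹) ^ k = c from by group]

lemma gconj (hb : b * b = 1) (hbc : b * c = c⁻¹ * b) (X : G) :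
    (c * b) * (b * X * b) * (c * b) = c * X * c⁻¹ := by
  have bcb : b * c * b = c⁻¹ := by rw [hbc, mul_assoc, hb, mul_one]
  rw [show (c * b) * (b * X * b) * (c * b) = c * ((b * b) * (X * (b * c * b))) from by group,
    hb, bcb, one_mul, mul_assoc]

lemma parity_helper (S : ℕ) (q : Bool) (c1 c2 : Prop) [Decidable c1] [Decidable c2] :
    xor (xor (xor q (decide (Odd S))) (decide c1)) (decide c2)
      = xor q (decide (Odd ((S + (if c1 then 1 else 0)) + (if c2 then 1 else 0)))) := by
  have e1 : Odd (S + 1 + 1) ↔ Odd S := by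
    rw [Nat.odd_iff, Nat.odd_iff]; omega
  have e2 : Odd (S + 1) ↔ ¬ Odd S := by
    rw [Nat.odd_iff, Nat.odd_iff]; omega
  by_cases h1 : c1 <;> by_cases h2 : c2
  · rw [if_pos h1, if_pos h2, decide_eq_true h1, decide_eq_true h2,
      decide_eq_decide.mpr e1]
    cases q <;> cases hd : decide (Odd S) <;> simp [hd]
  · rw [if_pos h1, if_neg h2, decide_eq_true h1, decide_eq_false h2, Nat.add_zero,
      decide_eq_decide.mpr e2, decide_not]
    cases q <;> cases hd : decide (Odd S) <;> simp [hd]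
  · rw [if_neg h1, if_pos h2, decide_eq_false h1, decide_eq_true h2, Nat.add_zero,
      decide_eq_decide.mpr e2, decide_not]
    cases q <;> cases hd : decide (Odd S) <;> simp [hd]
  · rw [if_neg h1, if_neg h2, decide_eq_false h1, decide_eq_false h2, Nat.add_zero]
    cases q <;> cases hd : decide (Odd S) <;> simp [hd]

end Generic

variable (cs : CoxeterSystem M W)

noncomputable def sig (i : B) : Equiv.Perm (W × Bool) :=
  Function.Involutive.toPerm
    (fun p => (cs.simple i * p.1 * cs.simple i, xor p.2 (decide (p.1 = cs.simple i))))
    (by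
      intro p
      have h : (cs.simple i * p.1 * cs.simple i = cs.simple i) ↔ p.1 = cs.simple i := by
        constructor
        · intro h
          have := congrArg (fun z => cs.simple i * z * cs.simple i) h
          simpa [mul_assoc, cs.simple_mul_simple_cancel_left,
            cs.simple_mul_simple_cancel_right] using this
        · intro h; rw [h]; simp [cs.simple_mul_simple_cancel_right,
            cs.simple_mul_simple_self]
      have h2 : (p.1 * cs.simple i = 1) ↔ p.1 = cs.simple i := by
        rw [mul_eq_one_iff_eq_inv, cs.inv_simple]
      simp [h, h2, mul_assoc, cs.simple_mul_simple_cancel_left, Bool.xor_assoc])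

lemma sig_apply (i : B) (p : W × Bool) :
    sig cs i p = (cs.simple i * p.1 * cs.simple i, xor p.2 (decide (p.1 = cs.simple i))) :=
  rfl

lemma sig_pow (i j : B) (k : ℕ) (p : W × Bool) :
    ((sig cs i * sig cs j) ^ k) p =
      ((cs.simple i * cs.simple j) ^ k * p.1 * ((cs.simple i * cs.simple j)⁻¹) ^ k,
        xor p.2 (decide (Odd (∑ l ∈ Finset.range (2 * k),
          (if p.1 = ((cs.simple i * cs.simple j)⁻¹) ^ l * cs.simple j then 1 else 0 : ℕ))))) := by
  have hb : cs.simple j * cs.simple j = 1 := cs.simple_mul_simple_self j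
  have hbc : cs.simple j * (cs.simple i * cs.simple j)
      = (cs.simple i * cs.simple j)⁻¹ * cs.simple j := by
    rw [mul_inv_rev, cs.inv_simple, cs.inv_simple]; group
  have hcb : (cs.simple i * cs.simple j) * cs.simple j = cs.simple i :=
    cs.simple_mul_simple_cancel_right j
  induction k with
  | zero => simp
  | succ k ih =>
    rw [pow_succ', Equiv.Perm.mul_apply, ih, Equiv.Perm.mul_apply, sig_apply, sig_apply]
    dsimp only
    have e1 := ge1 hb hbc k p.1
    have e2 := ge2 hb hbc k p.1
    rw [hcb] at e2
    refine Prod.ext ?_ ?_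
    · dsimp only
      rw [show cs.simple i * (cs.simple j * ((cs.simple i * cs.simple j) ^ k * p.1
            * ((cs.simple i * cs.simple j)⁻¹) ^ k) * cs.simple j) * cs.simple i
          = ((cs.simple i * cs.simple j) * cs.simple j)
            * (cs.simple j * ((cs.simple i * cs.simple j) ^ k * p.1
              * ((cs.simple i * cs.simple j)⁻¹) ^ k) * cs.simple j)
            * ((cs.simple i * cs.simple j) * cs.simple j) from by rw [hcb],
        gconj hb hbc]
      generalize (cs.simple i * cs.simple j : W) = c
      rw [pow_succ', pow_succ]
      group
    · dsimp only
      have h2 : 2 * (k + 1) = 2 * k + 1 + 1 := by ring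
      rw [h2, Finset.sum_range_succ, Finset.sum_range_succ,
        decide_eq_decide.mpr e1, decide_eq_decide.mpr e2]
      exact parity_helper _ p.2 _ _

end ZAux

namespace ZB
open ZAux
open Classical
variable (cs : CoxeterSystem M W)

lemma sig_liftable : M.IsLiftable (sig cs) := by
  intro i j
  apply Equiv.ext
  intro p
  have hc : (cs.simple i * cs.simple j) ^ M i j = 1 := cs.simple_mul_simple_pow i j
  have hcinv : ((cs.simple i * cs.simple j)⁻¹) ^ M i j = 1 := by
    rw [inv_pow, hc, inv_one]
  rw [sig_pow, hc, hcinv, one_mul, mul_one]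
  have hsum : (∑ l ∈ Finset.range (2 * M i j),
      (if p.1 = ((cs.simple i * cs.simple j)⁻¹) ^ l * cs.simple j then 1 else 0 : ℕ))
      = 2 * (∑ l ∈ Finset.range (M i j),
      (if p.1 = ((cs.simple i * cs.simple j)⁻¹) ^ l * cs.simple j then 1 else 0 : ℕ)) := by
    rw [two_mul (M i j), Finset.sum_range_add, two_mul]
    congr 1
    refine Finset.sum_congr rfl fun l _ => ?_
    rw [pow_add, hcinv, one_mul]
  rw [hsum]
  have hev : ¬ Odd (2 * (∑ l ∈ Finset.range (M i j),
      (if p.1 = ((cs.simple i * cs.simple j)⁻¹) ^ l * cs.simple j then 1 else 0 : ℕ))) := by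
    simp [Nat.odd_iff, Nat.mul_mod_right]
  rw [decide_eq_false hev]
  simp

noncomputable def rho : W →* Equiv.Perm (W × Bool) := cs.lift ⟨sig cs, sig_liftable cs⟩

lemma rho_simple (i : B) : rho cs (cs.simple i) = sig cs i :=
  cs.lift_apply_simple (sig_liftable cs) i

noncomputable def nn (w t : W) : Bool := ((rho cs w) (t, false)).2

lemma rho_apply (w : W) : ∀ t : W, ∀ ε : Bool,
    rho cs w (t, ε) = (w * t * w⁻¹, xor ε (nn cs w t)) := by
  induction w using cs.simple_induction_left with
  | one =>
    intro t ε
    simp [nn, map_one]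
  | mul_simple_left w i ih =>
    intro t ε
    have hmul : rho cs (cs.simple i * w) = rho cs (cs.simple i) * rho cs w := map_mul _ _ _
    have key : ∀ δ : Bool, rho cs (cs.simple i * w) (t, δ)
        = (cs.simple i * (w * t * w⁻¹) * cs.simple i,
            xor (xor δ (nn cs w t)) (decide (w * t * w⁻¹ = cs.simple i))) := by
      intro δ
      rw [hmul, Equiv.Perm.mul_apply, ih t δ, rho_simple, sig_apply]
    have hn : nn cs (cs.simple i * w) t
        = xor (nn cs w t) (decide (w * t * w⁻¹ = cs.simple i)) := by
      have := congrArg Prod.snd (key false)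
      simpa [nn] using this
    rw [key ε, hn]
    refine Prod.ext ?_ ?_
    · show cs.simple i * (w * t * w⁻¹) * cs.simple i
        = cs.simple i * w * t * (cs.simple i * w)⁻¹
      rw [mul_inv_rev, cs.inv_simple]
      group
    · show xor (xor ε (nn cs w t)) (decide (w * t * w⁻¹ = cs.simple i))
        = xor ε (xor (nn cs w t) (decide (w * t * w⁻¹ = cs.simple i)))
      rw [Bool.xor_assoc]

lemma nn_mul (u v t : W) : nn cs (u * v) t = xor (nn cs v t) (nn cs u (v * t * v⁻¹)) := by
  unfold nn
  rw [map_mul, Equiv.Perm.mul_apply, rho_apply cs v t false, rho_apply cs u (v * t * v⁻¹)]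
  simp [nn]

lemma nn_simple (i : B) (t : W) : nn cs (cs.simple i) t = decide (t = cs.simple i) := by
  unfold nn
  rw [rho_simple, sig_apply]
  simp

lemma nn_one (t : W) : nn cs 1 t = false := by
  unfold nn
  rw [map_one]
  rfl

lemma nn_inv (u t : W) : nn cs u⁻¹ (u * t * u⁻¹) = nn cs u t := by
  have h := nn_mul cs u⁻¹ u t
  rw [inv_mul_cancel, nn_one] at h
  cases hx : nn cs u t <;> cases hy : nn cs u⁻¹ (u * t * u⁻¹) <;>
    rw [hx, hy] at h <;> simp_all

lemma nn_refl {t : W} (ht : cs.IsReflection t) : nn cs t t = true := by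
  obtain ⟨u, i, rfl⟩ := ht
  have h1 := nn_mul cs (u * cs.simple i) u⁻¹ (u * cs.simple i * u⁻¹)
  have harg1 : u⁻¹ * (u * cs.simple i * u⁻¹) * u⁻¹⁻¹ = cs.simple i := by group
  have harg2 : u * cs.simple i * u⁻¹ = (u * cs.simple i) * u⁻¹ := by group
  rw [harg1, ← harg2] at h1
  have h2 := nn_mul cs u (cs.simple i) (cs.simple i)
  have harg3 : cs.simple i * cs.simple i * (cs.simple i)⁻¹ = cs.simple i := by
    rw [cs.inv_simple, cs.simple_mul_simple_cancel_right]
  rw [harg3, nn_simple] at h2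
  rw [nn_inv, h2] at h1
  rw [h1]
  simp

lemma nn_mem_ris (ω : List B) (t : W) (h : nn cs (cs.wordProd ω) t = true) :
    t ∈ cs.rightInvSeq ω := by
  induction ω with
  | nil =>
    rw [cs.wordProd_nil, nn_one] at h
    exact absurd h (by simp)
  | cons i ω ih =>
    rw [cs.wordProd_cons, nn_mul, nn_simple] at h
    show t ∈ (cs.wordProd ω)⁻¹ * cs.simple i * cs.wordProd ω :: cs.rightInvSeq ω
    cases hx : nn cs (cs.wordProd ω) t
    · rw [hx] at h
      simp only [Bool.false_xor, decide_eq_true_eq] at h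
      have : t = (cs.wordProd ω)⁻¹ * cs.simple i * cs.wordProd ω := by
        rw [← h]; group
      rw [this]
      exact List.mem_cons_self
    · exact List.mem_cons_of_mem _ (ih hx)

theorem nn_iff {w t : W} (ht : cs.IsReflection t) :
    nn cs w t = true ↔ cs.length (w * t) < cs.length w := by
  constructor
  · intro h
    obtain ⟨ω, hω, rfl⟩ := cs.exists_reduced_word' w
    exact (cs.isRightInversion_of_mem_rightInvSeq hω (nn_mem_ris cs ω t h)).2
  · intro h
    have hv : nn cs (w * t) t = false := by
      by_contra hc
      have hc' : nn cs (w * t) t = true := by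
        revert hc; cases nn cs (w * t) t <;> simp
      obtain ⟨ω, hω, hw⟩ := cs.exists_reduced_word' (w * t)
      rw [hw] at hc'
      have h2 := (cs.isRightInversion_of_mem_rightInvSeq hω (nn_mem_ris cs ω t hc')).2
      rw [← hw, mul_assoc, ht.mul_self, mul_one] at h2
      omega
    have hm := nn_mul cs (w * t) t t
    have harg : t * t * t⁻¹ = t := by rw [ht.mul_self, one_mul, ht.inv]
    rw [harg, nn_refl cs ht, hv, mul_assoc, ht.mul_self, mul_one] at hm
    simpa using hm

end ZB


/-- Given an `(n+1)`-tuple `(x₀, …, xₙ)`, the `n`-tuple obtained by multiplying the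
`j`-th and `(j+1)`-st entries: `(x₀, …, x_{j-1}, x_j · x_{j+1}, x_{j+2}, …, xₙ)`. -/
def contract {n : ℕ} (x : Fin (n + 1) → W) (j : Fin n) : Fin n → W :=
  fun i =>
    if (i : ℕ) < (j : ℕ) then x i.castSucc
    else if i = j then x i.castSucc * x i.succ
    else x i.succ

/-- `ζ` is an `n`-cocycle for the group cohomology of `W` with coefficients in the
abelian group `A` with trivial `W`-action: `(δζ) = 0`. -/
def IsCocycle {A : Type*} [AddCommGroup A] (n : ℕ) (ζ : (Fin n → W) → A) : Prop :=
  ∀ x : Fin (n + 1) → W,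
    ζ (x ∘ Fin.succ)
      + ∑ j : Fin n, ((-1 : ℤ) ^ ((j : ℕ) + 1)) • ζ (contract x j)
      + ((-1 : ℤ) ^ (n + 1)) • ζ (x ∘ Fin.castSucc) = 0

/-- `ζ` is an `n`-cocycle for the group cohomology of `W` with coefficients in the
`ℤ[W]`-module `A`: `(δζ) = 0`. -/
def IsCocycleM {A : Type*} [AddCommGroup A] [DistribMulAction W A] (n : ℕ)
    (ζ : (Fin n → W) → A) : Prop :=
  ∀ x : Fin (n + 1) → W,
    x 0 • ζ (x ∘ Fin.succ)
      + ∑ j : Fin n, ((-1 : ℤ) ^ ((j : ℕ) + 1)) • ζ (contract x j)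
      + ((-1 : ℤ) ^ (n + 1)) • ζ (x ∘ Fin.castSucc) = 0

/-- `ζ` is collapsing: it vanishes on tuples where two consecutive entries have
additive lengths. -/
def Collapsing (cs : CoxeterSystem M W) {A : Type*} [AddCommGroup A] (n : ℕ)
    (ζ : (Fin n → W) → A) : Prop :=
  ∀ x : Fin n → W, ∀ i : Fin n, ∀ hi : (i : ℕ) + 1 < n,
    cs.length (x i * x ⟨(i : ℕ) + 1, hi⟩) =
        cs.length (x i) + cs.length (x ⟨(i : ℕ) + 1, hi⟩) →
      ζ x = 0

/-- `ζ` is the canonical cocycle `ε_n^W`: a collapsing `n`-cocycle (trivial coefficients)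
taking the value `1` on `(s, …, s)` for every simple reflection `s`. -/
def IsEps (cs : CoxeterSystem M W) {A : Type*} [AddCommGroup A] [One A] (n : ℕ)
    (ζ : (Fin n → W) → A) : Prop :=
  IsCocycle n ζ ∧ Collapsing cs n ζ ∧ ∀ i : B, ζ (fun _ => cs.simple i) = 1

/-- The prefix product `x₀ ⋯ x_{k-1}`. -/
def pp {n : ℕ} (x : Fin n → W) (k : ℕ) : W := ((List.ofFn x).take k).prod

/-- The set `𝒟` of reflecting half-spaces: a half-space is determined by its wall
(a reflection `t`) and a side.  `(t, false)` is the half-space `D_{H_t}^+` containing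
the fundamental chamber `C₀`, and `(t, true)` is `D_{H_t}^-`. -/
def HalfSpace (cs : CoxeterSystem M W) : Type _ := {t : W // cs.IsReflection t} × Bool

/-- `v_D(C) = 1` if the chamber `C = wC₀` is contained in `D`, and `0` otherwise.
The chamber `wC₀` lies on the negative side of the wall of `t` exactly when `t` is a
left inversion of `w`. -/
noncomputable def chamberSide (cs : CoxeterSystem M W) (D : HalfSpace cs) (w : W) : ℤ :=
  if ((cs.length (D.1.1 * w) < cs.length w) ↔ D.2 = true) then 1 else 0

/-- The action of `W` on the set of reflecting half-spaces:  `w` sends the half-space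
with wall `H_t` to a half-space with wall `H_{wtw⁻¹} = wH_t`, and the side is switched
according to whether `wtw⁻¹` separates `C₀` from `wC₀`. -/
noncomputable def halfSpaceAct (cs : CoxeterSystem M W) (w : W) (D : HalfSpace cs) :
    HalfSpace cs :=
  (⟨w * D.1.1 * w⁻¹, D.1.2.conj w⟩,
    xor D.2 (decide (cs.length (w * D.1.1) < cs.length w)))

/-- The coefficient of the basis element `[D]` in
`Z_n^W(x₁,…,xₙ) = ∑_D (∏_{i=0}^{n-1} (v_D(Cᵢ) - v_D(C_{i+1}))) [D] ∈ ℤ[𝒟]`,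
where `Cᵢ = x₁⋯xᵢC₀`. -/
noncomputable def Zcoeff (cs : CoxeterSystem M W) (n : ℕ) (x : Fin n → W)
    (D : HalfSpace cs) : ℤ :=
  ∏ i ∈ Finset.range n, (chamberSide cs D (pp x i) - chamberSide cs D (pp x (i + 1)))



section ZMain
open ZAux ZB

variable (cs : CoxeterSystem M W)

lemma leftInv_iff {r : W} (w : W) (hr : cs.IsReflection r) :
    cs.length (r * w) < cs.length w ↔ nn cs w⁻¹ r = true := by
  rw [nn_iff cs hr]
  rw [show w⁻¹ * r = (r * w)⁻¹ by rw [mul_inv_rev, hr.inv], cs.length_inv, cs.length_inv]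

lemma chamberSide_act (u w : W) (D : HalfSpace cs) :
    chamberSide cs (halfSpaceAct cs u D) w = chamberSide cs D (u⁻¹ * w) := by
  obtain ⟨⟨t, ht⟩, b⟩ := D
  unfold chamberSide halfSpaceAct
  dsimp only
  have hconj : cs.IsReflection (u * t * u⁻¹) := ht.conj u
  have h1 : (cs.length ((u * t * u⁻¹) * w) < cs.length w)
      ↔ nn cs w⁻¹ (u * t * u⁻¹) = true := leftInv_iff cs w hconj
  have h2 : (cs.length (u * t) < cs.length u) ↔ nn cs u t = true := by
    rw [show u * t = (u * t * u⁻¹) * u by group, leftInv_iff cs u hconj, nn_inv]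
  have hd : decide (cs.length (u * t) < cs.length u) = nn cs u t := by
    cases hnu : nn cs u t
    · apply decide_eq_false
      intro hP
      rw [h2, hnu] at hP
      exact absurd hP (by simp)
    · exact decide_eq_true (h2.mpr hnu)
  have h3 : (cs.length (t * (u⁻¹ * w)) < cs.length (u⁻¹ * w))
      ↔ xor (nn cs u t) (nn cs w⁻¹ (u * t * u⁻¹)) = true := by
    rw [leftInv_iff cs (u⁻¹ * w) ht,
      show (u⁻¹ * w)⁻¹ = w⁻¹ * u by rw [mul_inv_rev, inv_inv], nn_mul]
  rw [hd]
  have hiff : ((cs.length (u * t * u⁻¹ * w) < cs.length w) ↔ (xor b (nn cs u t)) = true)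
      ↔ ((cs.length (t * (u⁻¹ * w)) < cs.length (u⁻¹ * w)) ↔ (b = true)) := by
    rw [h1, h3]
    cases b <;> cases nn cs u t <;> cases nn cs w⁻¹ (u * t * u⁻¹) <;> simp
  rw [if_congr hiff rfl rfl]

lemma pp_zero {n : ℕ} (x : Fin n → W) : pp x 0 = 1 := rfl

lemma pp_succ {n : ℕ} (x : Fin n → W) {k : ℕ} (hk : k < n) :
    pp x (k + 1) = pp x k * x ⟨k, hk⟩ := by
  unfold pp
  have hlen : k < (List.ofFn x).length := by simpa using hk
  rw [List.prod_take_succ _ _ hlen]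
  congr 1
  simp

lemma pp_castSucc {n : ℕ} (x : Fin (n + 1) → W) :
    ∀ k, k ≤ n → pp (x ∘ Fin.castSucc) k = pp x k := by
  intro k
  induction k with
  | zero => intro _; rfl
  | succ k ih =>
    intro hk
    have hk1 : k < n := hk
    have hk2 : k < n + 1 := Nat.lt_succ_of_lt hk1
    rw [pp_succ _ hk1, pp_succ x hk2, ih (le_of_lt hk1)]
    rfl

lemma pp_tail {n : ℕ} (x : Fin (n + 1) → W) :
    ∀ k, k ≤ n → x 0 * pp (x ∘ Fin.succ) k = pp x (k + 1) := by
  intro k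
  induction k with
  | zero =>
    intro _
    rw [pp_zero, mul_one, pp_succ x (Nat.succ_pos n), pp_zero, one_mul]
    exact congrArg x (Fin.ext (by simp))
  | succ k ih =>
    intro hk
    have hk1 : k < n := hk
    have hk2 : k + 1 < n + 1 := Nat.succ_lt_succ hk1
    rw [pp_succ _ hk1, ← mul_assoc, ih (le_of_lt hk1), pp_succ x hk2]
    rfl

lemma pp_contract_le {n : ℕ} (x : Fin (n + 1) → W) (j : Fin n) :
    ∀ k, k ≤ (j : ℕ) → pp (contract x j) k = pp x k := by
  intro k
  induction k with
  | zero => intro _; rfl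
  | succ k ih =>
    intro hk
    have hkj : k < (j : ℕ) := hk
    have hk1 : k < n := lt_trans hkj j.isLt
    have hk2 : k < n + 1 := Nat.lt_succ_of_lt hk1
    rw [pp_succ _ hk1, pp_succ x hk2, ih (le_of_lt hkj)]
    congr 1
    unfold contract
    rw [if_pos (show ((⟨k, hk1⟩ : Fin n) : ℕ) < (j : ℕ) from hkj)]
    rfl

lemma pp_contract_gt {n : ℕ} (x : Fin (n + 1) → W) (j : Fin n) :
    ∀ k, (j : ℕ) < k → k ≤ n → pp (contract x j) k = pp x (k + 1) := by
  intro k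
  induction k with
  | zero => intro h _; exact absurd h (Nat.not_lt_zero _)
  | succ k ih =>
    intro hjk hk
    have hk1 : k < n := hk
    rcases Nat.lt_or_ge (j : ℕ) k with hlt | hge
    · rw [pp_succ _ hk1, ih hlt (le_of_lt hk1),
        pp_succ x (show k + 1 < n + 1 from Nat.succ_lt_succ hk1)]
      congr 1
      unfold contract
      rw [if_neg ((by omega : ¬ k < (j : ℕ)) : ¬ ((⟨k, hk1⟩ : Fin n) : ℕ) < (j : ℕ)),
        if_neg (show ¬ (⟨k, hk1⟩ : Fin n) = j by
          intro he
          have hval : k = (j : ℕ) := congrArg Fin.val he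
          omega)]
      rfl
    · have hkj : k = (j : ℕ) := by omega
      have hjfin : (⟨k, hk1⟩ : Fin n) = j := Fin.ext hkj
      rw [pp_succ _ hk1, pp_contract_le x j k (le_of_eq hkj),
        pp_succ x (show k + 1 < n + 1 from Nat.succ_lt_succ hk1),
        pp_succ x (show k < n + 1 from Nat.lt_succ_of_lt hk1), mul_assoc]
      congr 1
      unfold contract
      rw [if_neg ((by omega : ¬ k < (j : ℕ)) : ¬ ((⟨k, hk1⟩ : Fin n) : ℕ) < (j : ℕ)), if_pos hjfin]
      rfl

end ZMain

/-- `Z_n^W` is an `n`-cocycle of `W` valued in `ℤ[𝒟]`: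
`x₁·Zₙ(x₂,…,x_{n+1}) + ∑_{j=1}^n (-1)^j Zₙ(x₁,…,x_jx_{j+1},…,x_{n+1})
  + (-1)^{n+1} Zₙ(x₁,…,xₙ) = 0`.
This is expressed coefficientwise: the coefficient of `[D]` in `x₁ · Zₙ(x₂,…,x_{n+1})`
is the coefficient of `[x₁⁻¹ · D]` in `Zₙ(x₂,…,x_{n+1})`. -/
theorem Z_is_cocycle (cs : CoxeterSystem M W) (n : ℕ) (x : Fin (n + 1) → W)
    (D : HalfSpace cs) :
    Zcoeff cs n (x ∘ Fin.succ) (halfSpaceAct cs (x 0)⁻¹ D)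
      + ∑ j : Fin n, ((-1 : ℤ) ^ ((j : ℕ) + 1)) * Zcoeff cs n (contract x j) D
      + ((-1 : ℤ) ^ (n + 1)) * Zcoeff cs n (x ∘ Fin.castSucc) D = 0 := by
  classical
  set f : ℕ → ℤ := fun k => chamberSide cs D (pp x k) with hf
  set a : ℕ → ℤ := fun i => f i - f (i + 1) with ha
  set Q : ℕ → ℤ := fun k => ∏ i ∈ Finset.range n, (if i < k then a i else a (i + 1)) with hQ
  have h3 : Zcoeff cs n (x ∘ Fin.castSucc) D = Q n := by
    unfold Zcoeff
    refine Finset.prod_congr rfl fun i hi => ?_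
    rw [Finset.mem_range] at hi
    rw [pp_castSucc x i (le_of_lt hi), pp_castSucc x (i + 1) hi, if_pos hi]
  have h1 : Zcoeff cs n (x ∘ Fin.succ) (halfSpaceAct cs (x 0)⁻¹ D) = Q 0 := by
    unfold Zcoeff
    refine Finset.prod_congr rfl fun i hi => ?_
    rw [Finset.mem_range] at hi
    rw [chamberSide_act, chamberSide_act, inv_inv, pp_tail x i (le_of_lt hi), pp_tail x (i + 1) hi,
      if_neg (Nat.not_lt_zero i)]
  have h2 : ∀ j : Fin n, Zcoeff cs n (contract x j) D = Q ((j : ℕ) + 1) + Q (j : ℕ) := by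
    intro j
    have hmem : (j : ℕ) ∈ Finset.range n := Finset.mem_range.mpr j.isLt
    unfold Zcoeff
    rw [← Finset.mul_prod_erase _ _ hmem]
    have hQ1 : Q ((j : ℕ) + 1) = a (j : ℕ) * ∏ i ∈ (Finset.range n).erase (j : ℕ),
        (if i < (j : ℕ) + 1 then a i else a (i + 1)) := by
      show (∏ i ∈ Finset.range n, if i < (j : ℕ) + 1 then a i else a (i + 1)) = _
      rw [← Finset.mul_prod_erase _ _ hmem, if_pos (Nat.lt_succ_self _)]
    have hQ2 : Q (j : ℕ) = a ((j : ℕ) + 1) * ∏ i ∈ (Finset.range n).erase (j : ℕ),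
        (if i < (j : ℕ) then a i else a (i + 1)) := by
      show (∏ i ∈ Finset.range n, if i < (j : ℕ) then a i else a (i + 1)) = _
      rw [← Finset.mul_prod_erase _ _ hmem, if_neg (lt_irrefl _)]
    have hsame1 : ∏ i ∈ (Finset.range n).erase (j : ℕ),
        (if i < (j : ℕ) + 1 then a i else a (i + 1))
        = ∏ i ∈ (Finset.range n).erase (j : ℕ), (if i < (j : ℕ) then a i else a (i + 1)) := by
      refine Finset.prod_congr rfl fun i hi => ?_
      obtain ⟨hne, hmem'⟩ := Finset.mem_erase.mp hi
      rcases Nat.lt_or_ge i (j : ℕ) with h | h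
      · rw [if_pos (Nat.lt_succ_of_lt h), if_pos h]
      · have hgt : (j : ℕ) < i := lt_of_le_of_ne h (fun he => hne he.symm)
        rw [if_neg (by omega), if_neg (by omega)]
    have hprod : ∏ i ∈ (Finset.range n).erase (j : ℕ),
        (chamberSide cs D (pp (contract x j) i) - chamberSide cs D (pp (contract x j) (i + 1)))
        = ∏ i ∈ (Finset.range n).erase (j : ℕ), (if i < (j : ℕ) then a i else a (i + 1)) := by
      refine Finset.prod_congr rfl fun i hi => ?_
      obtain ⟨hne, hmem'⟩ := Finset.mem_erase.mp hi
      rw [Finset.mem_range] at hmem'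
      rcases Nat.lt_or_ge i (j : ℕ) with h | h
      · rw [pp_contract_le x j i (le_of_lt h), pp_contract_le x j (i + 1) h, if_pos h]
      · have hgt : (j : ℕ) < i := lt_of_le_of_ne h (fun he => hne he.symm)
        rw [pp_contract_gt x j i hgt (le_of_lt hmem'),
          pp_contract_gt x j (i + 1) (by omega) hmem', if_neg (by omega)]
    have hcenter : chamberSide cs D (pp (contract x j) (j : ℕ))
        - chamberSide cs D (pp (contract x j) ((j : ℕ) + 1))
        = a (j : ℕ) + a ((j : ℕ) + 1) := by
      rw [pp_contract_le x j (j : ℕ) (le_refl _),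
        pp_contract_gt x j ((j : ℕ) + 1) (Nat.lt_succ_self _) j.isLt]
      rw [ha]
      dsimp only
      rw [hf]
      ring
    rw [hprod, hcenter, hQ1, hQ2, hsame1]
    ring
  have hsum : ∑ j : Fin n, ((-1 : ℤ) ^ ((j : ℕ) + 1)) * Zcoeff cs n (contract x j) D
      = (-1 : ℤ) ^ n * Q n - Q 0 := by
    calc ∑ j : Fin n, ((-1 : ℤ) ^ ((j : ℕ) + 1)) * Zcoeff cs n (contract x j) D
        = ∑ j : Fin n, (((-1 : ℤ) ^ ((j : ℕ) + 1) * Q ((j : ℕ) + 1))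
            - ((-1 : ℤ) ^ (j : ℕ) * Q (j : ℕ))) := by
          refine Finset.sum_congr rfl fun j _ => ?_
          rw [h2 j, pow_succ]
          ring
      _ = ∑ m ∈ Finset.range n, (((-1 : ℤ) ^ (m + 1) * Q (m + 1)) - ((-1 : ℤ) ^ m * Q m)) :=
          Fin.sum_univ_eq_sum_range
            (fun m => ((-1 : ℤ) ^ (m + 1) * Q (m + 1)) - ((-1 : ℤ) ^ m * Q m)) n
      _ = (-1 : ℤ) ^ n * Q n - (-1 : ℤ) ^ 0 * Q 0 :=
          Finset.sum_range_sub (fun m => (-1 : ℤ) ^ m * Q m) n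
      _ = (-1 : ℤ) ^ n * Q n - Q 0 := by rw [pow_zero, one_mul]
  rw [h1, h3, hsum, pow_succ]
  ring
end

section
/- For each $s \in S$ and $n \ge 1$, $Z_n^W(s, s, \ldots, s) = (-1)^{\lfloor n/2 \rfloor}[D_s^+] + (-1)^{\lfloor (n+1)/2 \rfloor}[D_s^-]$. -/
open CoxeterSystem

variable {B W : Type*} [Group W] {M : CoxeterMatrix B}

lemma neg_one_pow_half_succ (n : ℕ) :
    ((-1 : ℤ) ^ (n / 2)) * (-1) ^ n = (-1) ^ ((n + 1) / 2) := by
  rcases Nat.even_or_odd n with he | ho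
  · obtain ⟨k, hk⟩ := id he
    have h1 : n / 2 = (n + 1) / 2 := by omega
    rw [he.neg_one_pow, h1, mul_one]
  · obtain ⟨k, hk⟩ := id ho
    have h1 : (n + 1) / 2 = n / 2 + 1 := by omega
    rw [ho.neg_one_pow, h1, pow_succ, mul_neg_one]

lemma prod_neg_one_pow (n : ℕ) :
    ∏ k ∈ Finset.range n, (-1 : ℤ) ^ k = (-1) ^ (n / 2) := by
  induction n with
  | zero => simp
  | succ m ih => rw [Finset.prod_range_succ, ih, neg_one_pow_half_succ]

open scoped Classical in
/-- For a simple reflection `s` and `n ≥ 1`,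
`Z_n^W(s, s, …, s) = (-1)^{⌊n/2⌋}[D_s^+] + (-1)^{⌊(n+1)/2⌋}[D_s^-]`,
expressed coefficientwise on `ℤ[𝒟]`; here `D_s^+` is `(s, false)` (the half-space
bounded by the wall `H_s` containing the fundamental chamber) and `D_s^-` is `(s, true)`. -/
theorem Z_apply_const_simple (cs : CoxeterSystem M W) (n : ℕ) (hn : 1 ≤ n) (i : B)
    (D : HalfSpace cs) :
    Zcoeff cs n (fun _ => cs.simple i) D =
      (-1 : ℤ) ^ (n / 2) * (if D.1.1 = cs.simple i ∧ D.2 = false then 1 else 0)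
        + (-1 : ℤ) ^ ((n + 1) / 2) * (if D.1.1 = cs.simple i ∧ D.2 = true then 1 else 0) := by
  obtain ⟨⟨t, ht⟩, b⟩ := D
  have hss : cs.simple i * cs.simple i = 1 := cs.simple_mul_simple_self i
  have heven : ∀ k : ℕ, Even k → (cs.simple i) ^ k = 1 := by
    intro k ⟨m, hm⟩
    subst hm
    rw [← two_mul, pow_mul, sq, hss, one_pow]
  have hodd : ∀ k : ℕ, Odd k → (cs.simple i) ^ k = cs.simple i := by
    intro k ⟨m, hm⟩
    subst hm
    rw [pow_succ, pow_mul, sq, hss, one_pow, one_mul]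
  have hpp : ∀ k : ℕ, k ≤ n → pp (fun _ : Fin n => cs.simple i) k = (cs.simple i) ^ k := by
    intro k hk
    unfold pp
    rw [List.ofFn_const, List.take_replicate, List.prod_replicate, min_eq_left hk]
  have hlen1 : cs.length 1 = 0 := cs.length_one
  have hlens : cs.length (cs.simple i) = 1 := cs.length_simple i
  by_cases hts : t = cs.simple i
  · subst hts
    -- chamberSide values on powers
    have hval : ∀ k : ℕ, chamberSide cs (⟨cs.simple i, ht⟩, b) ((cs.simple i) ^ k) =
        if (Odd k ↔ b = true) then 1 else 0 := by
      intro k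
      rcases Nat.even_or_odd k with he | ho
      · rw [heven k he]
        unfold chamberSide
        simp only [mul_one, hlen1, hlens]
        have h1 : ¬ (1 : ℕ) < 0 := by omega
        have h2 : ¬ Odd k := Nat.not_odd_iff_even.mpr he
        simp [h1, h2]
      · rw [hodd k ho]
        unfold chamberSide
        simp only [hss, hlen1, hlens]
        have h1 : (0 : ℕ) < 1 := by omega
        simp [h1, ho]
    have key : ∀ k : ℕ, k < n →
        chamberSide cs (⟨cs.simple i, ht⟩, b) (pp (fun _ : Fin n => cs.simple i) k)
          - chamberSide cs (⟨cs.simple i, ht⟩, b) (pp (fun _ : Fin n => cs.simple i) (k + 1))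
        = (if b then -1 else 1) * (-1 : ℤ) ^ k := by
      intro k hk
      rw [hpp k (by omega), hpp (k + 1) (by omega), hval k, hval (k + 1)]
      rcases Nat.even_or_odd k with he | ho
      · have h2 : ¬ Odd k := Nat.not_odd_iff_even.mpr he
        have h3 : Odd (k + 1) := Even.add_one he
        rw [he.neg_one_pow]
        cases b <;> simp [h2, h3]
      · have h3 : ¬ Odd (k + 1) := by
          rw [Nat.odd_add_one]; exact not_not_intro ho
        rw [ho.neg_one_pow]
        cases b <;> simp [ho, h3]
    unfold Zcoeff
    rw [Finset.prod_congr rfl (fun k hk => key k (Finset.mem_range.mp hk))]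
    rw [Finset.prod_mul_distrib, Finset.prod_const, prod_neg_one_pow]
    cases b
    · simp [← neg_one_pow_half_succ]
    · simp only [if_true, Finset.card_range]
      have : ((-1 : ℤ)) ^ n * (-1) ^ (n / 2) = (-1) ^ ((n + 1) / 2) := by
        rw [mul_comm, neg_one_pow_half_succ]
      simp [this]
  · -- t ≠ simple i : every chamberSide value agrees at step 0
    have hts' : cs.length (t * cs.simple i) ≠ 0 := by
      intro h
      rw [cs.length_eq_zero_iff] at h
      apply hts
      have : t = (cs.simple i)⁻¹ := eq_inv_of_mul_eq_one_left h
      rwa [cs.inv_simple] at this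
    rw [if_neg (by simp [hts]), if_neg (by simp [hts]), mul_zero, mul_zero, add_zero]
    unfold Zcoeff
    apply Finset.prod_eq_zero (Finset.mem_range.mpr (by omega : 0 < n))
    rw [hpp 0 (by omega), hpp 1 (by omega), pow_zero, pow_one]
    unfold chamberSide
    simp only [mul_one, hlen1, hlens]
    have h1 : ¬ cs.length t < 0 := by omega
    have h2 : ¬ cs.length (t * cs.simple i) < 1 := by omega
    simp [h1, h2, hts, sub_self]
end

section
/- Let $n \ge 2$, let $A$ be a $\mathbb{Z}[W]$-module, and let $\zeta \in Z^n(W,A)$ be a collapsing $n$-cocycle. For $s \in S$ set $a_s := \zeta(s,\ldots,s)$. If $s, s' \in S$ and $w \in W$ satisfy $wsw^{-1} = s'$ and $|ws| > |w|$, then $w \cdot a_s = a_{s'}$. -/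
open CoxeterSystem

variable {B W : Type*} [Group W] {M : CoxeterMatrix B}

section Aux

variable {B W : Type*} [Group W] {M : CoxeterMatrix B}

/-- The tuple `(s'^k, w, s^{N-k-1})`. -/
def XX {W : Type*} (s' w s : W) (k N : ℕ) : Fin N → W :=
  fun m => if (m : ℕ) < k then s' else if (m : ℕ) = k then w else s

lemma XX_lt {W : Type*} (s' w s : W) (k N : ℕ) (m : Fin N) (h : (m : ℕ) < k) :
    XX s' w s k N m = s' := if_pos h

lemma XX_eq {W : Type*} (s' w s : W) (k N : ℕ) (m : Fin N) (h : (m : ℕ) = k) :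
    XX s' w s k N m = w := by
  unfold XX; rw [if_neg (by omega), if_pos h]

lemma XX_gt {W : Type*} (s' w s : W) (k N : ℕ) (m : Fin N) (h : k < (m : ℕ)) :
    XX s' w s k N m = s := by
  unfold XX; rw [if_neg (by omega), if_neg (by omega)]

lemma contract_self {n : ℕ} (x : Fin (n + 1) → W) (j : Fin n) :
    contract x j j = x j.castSucc * x j.succ := by
  simp [contract]

lemma contract_XX_mid {N : ℕ} (s' w s : W) (k : ℕ) (j : Fin N) (hj : (j : ℕ) = k) :
    contract (XX s' w s k (N + 1)) j = XX s' (w * s) s k N := by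
  funext m
  simp only [contract]
  rcases lt_trichotomy (m : ℕ) (j : ℕ) with h | h | h
  · rw [if_pos h, XX_lt s' w s k (N + 1) m.castSucc (by rw [Fin.coe_castSucc]; omega),
      XX_lt s' (w * s) s k N m (by omega)]
  · have hm : m = j := Fin.ext h
    rw [if_neg (by omega), if_pos hm,
      XX_eq s' w s k (N + 1) m.castSucc (by rw [Fin.coe_castSucc]; omega),
      XX_gt s' w s k (N + 1) m.succ (by rw [Fin.val_succ]; omega),
      XX_eq s' (w * s) s k N m (by omega)]
  · rw [if_neg (by omega), if_neg (Fin.ne_of_val_ne (by omega)),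
      XX_gt s' w s k (N + 1) m.succ (by rw [Fin.val_succ]; omega),
      XX_gt s' (w * s) s k N m (by omega)]

lemma contract_XX_pred {N : ℕ} (s' w s : W) (k : ℕ) (j : Fin N) (hj : (j : ℕ) + 1 = k) :
    contract (XX s' w s k (N + 1)) j = XX s' (s' * w) s (k - 1) N := by
  funext m
  simp only [contract]
  rcases lt_trichotomy (m : ℕ) (j : ℕ) with h | h | h
  · rw [if_pos h, XX_lt s' w s k (N + 1) m.castSucc (by rw [Fin.coe_castSucc]; omega),
      XX_lt s' (s' * w) s (k - 1) N m (by omega)]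
  · have hm : m = j := Fin.ext h
    rw [if_neg (by omega), if_pos hm,
      XX_lt s' w s k (N + 1) m.castSucc (by rw [Fin.coe_castSucc]; omega),
      XX_eq s' w s k (N + 1) m.succ (by rw [Fin.val_succ]; omega),
      XX_eq s' (s' * w) s (k - 1) N m (by omega)]
  · rw [if_neg (by omega), if_neg (Fin.ne_of_val_ne (by omega)),
      XX_gt s' w s k (N + 1) m.succ (by rw [Fin.val_succ]; omega),
      XX_gt s' (s' * w) s (k - 1) N m (by omega)]

lemma XX_comp_succ {W : Type*} (s' w s : W) (k N : ℕ) (hk : 1 ≤ k) :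
    XX s' w s k (N + 1) ∘ Fin.succ = XX s' w s (k - 1) N := by
  funext m
  simp only [Function.comp_apply]
  rcases lt_trichotomy (m : ℕ) (k - 1) with h | h | h
  · rw [XX_lt s' w s k (N + 1) m.succ (by rw [Fin.val_succ]; omega),
      XX_lt s' w s (k - 1) N m h]
  · rw [XX_eq s' w s k (N + 1) m.succ (by rw [Fin.val_succ]; omega),
      XX_eq s' w s (k - 1) N m h]
  · rw [XX_gt s' w s k (N + 1) m.succ (by rw [Fin.val_succ]; omega),
      XX_gt s' w s (k - 1) N m h]

lemma XX_zero_comp_succ {W : Type*} (s' w s : W) (N : ℕ) :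
    XX s' w s 0 (N + 1) ∘ Fin.succ = fun _ => s := by
  funext m
  simp only [Function.comp_apply]
  rw [XX_gt s' w s 0 (N + 1) m.succ (by rw [Fin.val_succ]; omega)]

lemma XX_comp_castSucc {W : Type*} (s' w s : W) (k N : ℕ) :
    XX s' w s k (N + 1) ∘ Fin.castSucc = XX s' w s k N := by
  funext m
  simp only [Function.comp_apply]
  rcases lt_trichotomy (m : ℕ) k with h | h | h
  · rw [XX_lt s' w s k (N + 1) m.castSucc (by rw [Fin.coe_castSucc]; omega),
      XX_lt s' w s k N m h]
  · rw [XX_eq s' w s k (N + 1) m.castSucc (by rw [Fin.coe_castSucc]; omega),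
      XX_eq s' w s k N m h]
  · rw [XX_gt s' w s k (N + 1) m.castSucc (by rw [Fin.coe_castSucc]; omega),
      XX_gt s' w s k N m h]

lemma collapse_of_eq_one (cs : CoxeterSystem M W) {A : Type*} [AddCommGroup A]
    {n : ℕ} (hn : 2 ≤ n) {ζ : (Fin n → W) → A} (hcol : Collapsing cs n ζ)
    (x : Fin n → W) (j : Fin n) (hx : x j = 1) : ζ x = 0 := by
  by_cases h : (j : ℕ) + 1 < n
  · refine hcol x j h ?_
    rw [hx, one_mul, cs.length_one, Nat.zero_add]
  · have hjn := j.isLt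
    have hb : (j : ℕ) - 1 < n := by omega
    have h1 : ((⟨(j : ℕ) - 1, hb⟩ : Fin n) : ℕ) + 1 < n := by
      show (j : ℕ) - 1 + 1 < n; omega
    have hj : (⟨((⟨(j : ℕ) - 1, hb⟩ : Fin n) : ℕ) + 1, h1⟩ : Fin n) = j :=
      Fin.ext (by show (j : ℕ) - 1 + 1 = (j : ℕ); omega)
    have hx2 : x ⟨((⟨(j : ℕ) - 1, hb⟩ : Fin n) : ℕ) + 1, h1⟩ = 1 := by
      rw [hj]; exact hx
    refine hcol x ⟨(j : ℕ) - 1, hb⟩ h1 ?_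
    rw [hx2, mul_one, cs.length_one, Nat.add_zero]

lemma head_cancel {A : Type*} [AddCommGroup A] {u v : A} {c : ℤ} (hc : c = -1)
    (h : u + c • v = 0) : u = v := by
  subst hc
  rw [neg_one_smul] at h
  exact add_neg_eq_zero.mp h

lemma sign_cancel {A : Type*} [AddCommGroup A] (p : ℕ) (u v : A)
    (h : ((-1 : ℤ) ^ p) • u + ((-1 : ℤ) ^ (p + 1)) • v = 0) : u = v := by
  have h2 := congrArg (fun z => ((-1 : ℤ) ^ p) • z) h
  simp only [smul_add, smul_smul, smul_zero] at h2
  rw [← pow_add, ← pow_add, Even.neg_one_pow ⟨p, rfl⟩,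
    Odd.neg_one_pow ⟨p, by ring⟩, one_smul, neg_one_smul] at h2
  exact add_neg_eq_zero.mp h2

end Aux


/-- Let `ζ ∈ Zⁿ(W, A)` be a collapsing cocycle (`n ≥ 2`) valued in a `ℤ[W]`-module `A`,
and set `a_s := ζ(s, …, s)`.  If `w s w⁻¹ = s'` with `s, s'` simple and `|ws| > |w|`
(i.e. `w D_s^+ = D_{s'}^+`), then `w • a_s = a_{s'}`. -/
theorem smul_const_simple_value (cs : CoxeterSystem M W) (n : ℕ) (hn : 2 ≤ n)
    {A : Type*} [AddCommGroup A] [DistribMulAction W A]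
    (ζ : (Fin n → W) → A) (hcoc : IsCocycleM n ζ) (hcol : Collapsing cs n ζ)
    (i i' : B) (w : W) (hconj : w * cs.simple i * w⁻¹ = cs.simple i')
    (hlen : cs.length w < cs.length (w * cs.simple i)) :
    w • ζ (fun _ => cs.simple i) = ζ (fun _ => cs.simple i') := by
  set s := cs.simple i with hsdef
  set s' := cs.simple i' with hs'def
  have hsw : s' * w = w * s := by rw [← hconj]; group
  have hss : s * s = 1 := cs.simple_mul_simple_self i
  have hss' : s' * s' = 1 := cs.simple_mul_simple_self i'
  have hls : cs.length (w * s) = cs.length w + 1 := by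
    have hms := cs.length_mul_simple w i
    rw [← hsdef] at hms
    exact hms.resolve_right (by omega)
  have hlens : cs.length s = 1 := cs.length_simple i
  have hlens' : cs.length s' = 1 := cs.length_simple i'
  have hws : cs.length (w * s) = cs.length w + cs.length s := by rw [hls, hlens]
  have hsw' : cs.length (s' * w) = cs.length s' + cs.length w := by
    rw [hsw, hls, hlens']; omega
  have hn0 : 0 < n := by omega
  have hn1 : n - 1 < n := by omega
  -- vanishing of contract terms away from the diagonal
  have hz1 : ∀ (k : ℕ) (j : Fin n), (j : ℕ) + 1 < k →
      ζ (contract (XX s' w s k (n + 1)) j) = 0 := by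
    intro k j h
    apply collapse_of_eq_one cs hn hcol _ j
    rw [contract_self, XX_lt s' w s k (n + 1) j.castSucc (by rw [Fin.coe_castSucc]; omega),
      XX_lt s' w s k (n + 1) j.succ (by rw [Fin.val_succ]; omega), hss']
  have hz2 : ∀ (k : ℕ) (j : Fin n), k < (j : ℕ) →
      ζ (contract (XX s' w s k (n + 1)) j) = 0 := by
    intro k j h
    apply collapse_of_eq_one cs hn hcol _ j
    rw [contract_self, XX_gt s' w s k (n + 1) j.castSucc (by rw [Fin.coe_castSucc]; omega),
      XX_gt s' w s k (n + 1) j.succ (by rw [Fin.val_succ]; omega), hss]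
  -- vanishing of the tuples (s'^k, w, s^{n-k-1})
  have hXcol : ∀ k : ℕ, k < n → ζ (XX s' w s k n) = 0 := by
    intro k hk
    by_cases h : k + 1 < n
    · refine hcol _ ⟨k, by omega⟩ h ?_
      rw [XX_eq s' w s k n ⟨k, by omega⟩ rfl,
        XX_gt s' w s k n ⟨k + 1, h⟩ (Nat.lt_succ_self k)]
      exact hws
    · have hk1 : 1 ≤ k := by omega
      have hb : k - 1 < n := by omega
      have h1 : ((⟨k - 1, hb⟩ : Fin n) : ℕ) + 1 < n := by show k - 1 + 1 < n; omega
      refine hcol _ ⟨k - 1, hb⟩ h1 ?_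
      rw [XX_lt s' w s k n ⟨k - 1, hb⟩ (by show k - 1 < k; omega),
        XX_eq s' w s k n ⟨k - 1 + 1, h1⟩ (by show k - 1 + 1 = k; omega)]
      exact hsw'
  -- the contraction identities, rewritten with s'w = ws
  have cmid : ∀ (k : ℕ) (j : Fin n), (j : ℕ) = k →
      contract (XX s' w s k (n + 1)) j = XX s' (w * s) s k n := by
    intro k j hj
    rw [contract_XX_mid s' w s k j hj]
  have cpred : ∀ (k : ℕ) (j : Fin n), (j : ℕ) + 1 = k →
      contract (XX s' w s k (n + 1)) j = XX s' (w * s) s (k - 1) n := by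
    intro k j hj
    rw [contract_XX_pred s' w s k j hj, hsw]
  -- Claim A : w • ζ(s,…,s) = ζ(ws, s, …, s)
  have claimA : w • ζ (fun _ => s) = ζ (XX s' (w * s) s 0 n) := by
    have h := hcoc (XX s' w s 0 (n + 1))
    rw [XX_zero_comp_succ, XX_comp_castSucc] at h
    have h0 : XX s' w s 0 (n + 1) 0 = w := XX_eq s' w s 0 (n + 1) 0 (by simp)
    rw [h0, hXcol 0 hn0, smul_zero, add_zero] at h
    rw [Finset.sum_eq_single_of_mem (⟨0, hn0⟩ : Fin n) (Finset.mem_univ _)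
      (fun b _ hb => by
        have hbv : (b : ℕ) ≠ 0 := fun hv => hb (Fin.ext hv)
        rw [hz2 0 b (by omega), smul_zero])] at h
    rw [cmid 0 ⟨0, hn0⟩ rfl] at h
    refine head_cancel ?_ h
    norm_num [show ((⟨0, hn0⟩ : Fin n) : ℕ) = 0 from rfl]
  -- Claim B : ζ(s'^k, ws, s^{n-k-1}) = ζ(s'^{k+1}, ws, s^{n-k-2})
  have claimB : ∀ k : ℕ, k + 1 < n →
      ζ (XX s' (w * s) s k n) = ζ (XX s' (w * s) s (k + 1) n) := by
    intro k hk
    have h := hcoc (XX s' w s (k + 1) (n + 1))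
    rw [XX_comp_succ s' w s (k + 1) n (by omega), XX_comp_castSucc] at h
    simp only [Nat.add_sub_cancel] at h
    have h0 : XX s' w s (k + 1) (n + 1) 0 = s' :=
      XX_lt s' w s (k + 1) (n + 1) 0 (by simp)
    rw [h0, hXcol k (by omega), smul_zero, zero_add, hXcol (k + 1) hk, smul_zero,
      add_zero] at h
    have e1 : ζ (contract (XX s' w s (k + 1) (n + 1)) (⟨k, by omega⟩ : Fin n))
        = ζ (XX s' (w * s) s k n) := by
      rw [cpred (k + 1) ⟨k, by omega⟩ rfl, Nat.add_sub_cancel]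
    have e2 : ζ (contract (XX s' w s (k + 1) (n + 1)) (⟨k + 1, hk⟩ : Fin n))
        = ζ (XX s' (w * s) s (k + 1) n) := by
      rw [cmid (k + 1) ⟨k + 1, hk⟩ rfl]
    rw [Finset.sum_eq_add_of_mem (⟨k, by omega⟩ : Fin n) (⟨k + 1, hk⟩ : Fin n)
      (Finset.mem_univ _) (Finset.mem_univ _)
      (Fin.ne_of_val_ne (Nat.ne_of_lt (Nat.lt_succ_self k)))
      (fun c _ hc => by
        have hv1 : (c : ℕ) ≠ k := fun hv => hc.1 (Fin.ext hv)
        have hv2 : (c : ℕ) ≠ k + 1 := fun hv => hc.2 (Fin.ext hv)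
        rcases Nat.lt_or_ge (c : ℕ) k with hlt | hge
        · rw [hz1 (k + 1) c (by omega), smul_zero]
        · rw [hz2 (k + 1) c (by omega), smul_zero]), e1, e2] at h
    exact sign_cancel (k + 1) _ _ h
  -- Claim C : ζ(s'^{n-1}, ws) = ζ(s', …, s')
  have claimC : ζ (XX s' (w * s) s (n - 1) n) = ζ (fun _ => s') := by
    have h := hcoc (XX s' w s n (n + 1))
    rw [XX_comp_succ s' w s n n (by omega), XX_comp_castSucc] at h
    have h0 : XX s' w s n (n + 1) 0 = s' := XX_lt s' w s n (n + 1) 0 (by simp; omega)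
    have hlast : XX s' w s n n = fun _ => s' := by
      funext m
      rw [XX_lt s' w s n n m m.isLt]
    rw [h0, hXcol (n - 1) hn1, smul_zero, zero_add, hlast] at h
    have eexp : ((⟨n - 1, hn1⟩ : Fin n) : ℕ) + 1 = n := by
      show n - 1 + 1 = n; omega
    have e1 : ζ (contract (XX s' w s n (n + 1)) (⟨n - 1, hn1⟩ : Fin n))
        = ζ (XX s' (w * s) s (n - 1) n) := by
      rw [cpred n ⟨n - 1, hn1⟩ eexp]
    rw [Finset.sum_eq_single_of_mem (⟨n - 1, hn1⟩ : Fin n) (Finset.mem_univ _)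
      (fun b _ hb => by
        have hbl := b.isLt
        have hbv : (b : ℕ) ≠ n - 1 := fun hv => hb (Fin.ext hv)
        rw [hz1 n b (by omega), smul_zero]), e1, eexp] at h
    exact sign_cancel n _ _ h
  -- chain the equalities together
  have chain : ∀ k : ℕ, k < n → ζ (XX s' (w * s) s 0 n) = ζ (XX s' (w * s) s k n) := by
    intro k
    induction k with
    | zero => intro _; rfl
    | succ k ih => intro hk; rw [ih (by omega), claimB k hk]
  rw [claimA, chain (n - 1) hn1, claimC]
end

section
/- Let $n \ge 2$, $A$ a $\mathbb{Z}[W]$-module, and $\zeta \in Z^n(W,A)$ a collapsing cocycle. Then for every $s \in S$, $s \cdot \zeta(s,\ldots,s) = (-1)^n \zeta(s,\ldots,s)$. -/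
open CoxeterSystem

variable {B W : Type*} [Group W] {M : CoxeterMatrix B}

/-- Let `ζ ∈ Zⁿ(W, A)` be a collapsing cocycle (`n ≥ 2`) valued in a `ℤ[W]`-module `A`.
Then for every simple reflection `s`, `s • ζ(s, …, s) = (-1)ⁿ ζ(s, …, s)`. -/
theorem simple_smul_const_simple_value (cs : CoxeterSystem M W) (n : ℕ) (hn : 2 ≤ n)
    {A : Type*} [AddCommGroup A] [DistribMulAction W A]
    (ζ : (Fin n → W) → A) (hcoc : IsCocycleM n ζ) (hcol : Collapsing cs n ζ) (i : B) :
    cs.simple i • ζ (fun _ => cs.simple i) =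
      ((-1 : ℤ) ^ n) • ζ (fun _ => cs.simple i) := by
  set s := cs.simple i with hs
  have hx := hcoc (fun _ => s)
  have hmid : ∀ j : Fin n, ζ (contract (fun _ : Fin (n+1) => s) j) = 0 := by
    intro j
    have hc : contract (fun _ : Fin (n+1) => s) j = fun k => if k = j then 1 else s := by
      funext k
      simp only [contract]
      by_cases h : k = j
      · subst h
        rw [if_neg (lt_irrefl _), if_pos rfl, if_pos rfl, cs.simple_mul_simple_self]
      · simp only [if_neg h]
        by_cases h1 : (k : ℕ) < (j : ℕ)
        · rw [if_pos h1]
        · rw [if_neg h1]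
    rw [hc]
    by_cases hj : (j : ℕ) + 1 < n
    · apply hcol _ j hj
      have hne : (⟨(j : ℕ) + 1, hj⟩ : Fin n) ≠ j := by
        simp only [ne_eq, Fin.ext_iff]; omega
      rw [if_pos rfl, if_neg hne, one_mul, cs.length_one, cs.length_simple]
    · have h2 : n - 2 + 1 < n := by omega
      apply hcol _ ⟨n - 2, by omega⟩ h2
      have hjlt := j.isLt
      have hne : (⟨n - 2, by omega⟩ : Fin n) ≠ j := by
        intro h
        have := congrArg Fin.val h
        simp only at this
        omega
      have heq : (⟨n - 2 + 1, h2⟩ : Fin n) = j := Fin.ext (by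
        show n - 2 + 1 = (j : ℕ); omega)
      rw [if_neg hne, if_pos heq, mul_one, cs.length_one, cs.length_simple]
  rw [Finset.sum_eq_zero (fun j _ => by rw [hmid j, smul_zero])] at hx
  have hcomp1 : ((fun _ : Fin (n+1) => s) ∘ Fin.succ) = fun _ : Fin n => s := rfl
  have hcomp2 : ((fun _ : Fin (n+1) => s) ∘ Fin.castSucc) = fun _ : Fin n => s := rfl
  rw [hcomp1, hcomp2, add_zero] at hx
  have hpow : ((-1 : ℤ) ^ (n + 1)) • ζ (fun _ : Fin n => s)
      = -(((-1 : ℤ) ^ n) • ζ (fun _ : Fin n => s)) := by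
    rw [pow_succ, mul_comm, mul_smul, neg_one_zsmul]
  rw [hpow] at hx
  have := add_neg_eq_zero.mp hx
  exact this
end

section
/- Let $n \ge 2$, $A$ a $\mathbb{Z}[W]$-module, and $\xi \in Z^n(W,A)$ a collapsing $n$-cocycle such that $\xi(s,\ldots,s) = 0$ for all $s \in S$. Then $\xi$ is identically zero. -/
open CoxeterSystem

variable {B W : Type*} [Group W] {M : CoxeterMatrix B}

section Aux

variable {B W : Type*} [Group W] {M : CoxeterMatrix B}

/-- Sum of lengths of the entries of a tuple. -/
noncomputable def lsum (cs : CoxeterSystem M W) {m : ℕ} (x : Fin m → W) : ℕ := ∑ k, cs.length (x k)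

lemma neg_one_pow_zsmul_eq_zero {A : Type*} [AddCommGroup A] {k : ℕ} {a : A}
    (h : ((-1 : ℤ) ^ k) • a = 0) : a = 0 := by
  have := congrArg (fun b => ((-1 : ℤ) ^ k) • b) h
  simpa [smul_smul, ← pow_add, pow_mul_comm', ← two_mul, pow_mul] using this

lemma contract_eq_succAbove {n : ℕ} (z : Fin (n + 1) → W) (j : Fin n) {i : Fin n}
    (hij : i ≠ j) : contract z j i = z (j.succ.succAbove i) := by
  rcases lt_or_gt_of_ne hij with h | h
  · rw [contract]
    rw [if_pos (show (i:ℕ) < (j:ℕ) from h), Fin.succAbove_succ_of_le _ _ h.le]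
  · rw [contract]
    rw [if_neg (show ¬ (i:ℕ) < (j:ℕ) by omega), if_neg hij,
      Fin.succAbove_succ_of_lt _ _ h]

lemma lsum_contract (cs : CoxeterSystem M W) {n : ℕ} (z : Fin (n + 1) → W) (j : Fin n) :
    lsum cs (contract z j) + cs.length (z j.castSucc) + cs.length (z j.succ)
      = lsum cs z + cs.length (z j.castSucc * z j.succ) := by
  have h1 : lsum cs z = cs.length (z j.succ) + ∑ i, cs.length (z (j.succ.succAbove i)) :=
    Fin.sum_univ_succAbove (fun k => cs.length (z k)) j.succ
  have h2 : ∑ i ∈ Finset.univ.erase j, cs.length (z (j.succ.succAbove i))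
        + cs.length (z (j.succ.succAbove j))
      = ∑ i, cs.length (z (j.succ.succAbove i)) :=
    Finset.sum_erase_add _ _ (Finset.mem_univ j)
  have h3 : ∑ i ∈ Finset.univ.erase j, cs.length (contract z j i)
        + cs.length (contract z j j)
      = lsum cs (contract z j) :=
    Finset.sum_erase_add _ _ (Finset.mem_univ j)
  have h4 : ∑ i ∈ Finset.univ.erase j, cs.length (contract z j i)
      = ∑ i ∈ Finset.univ.erase j, cs.length (z (j.succ.succAbove i)) :=
    Finset.sum_congr rfl fun i hi => by
      rw [contract_eq_succAbove z j (Finset.ne_of_mem_erase hi)]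
  have h5 : contract z j j = z j.castSucc * z j.succ := by
    rw [contract]
    rw [if_neg (show ¬ (j:ℕ) < (j:ℕ) by omega), if_pos rfl]
  rw [Fin.succAbove_succ_self] at h2
  rw [h4, h5] at h3
  omega

lemma lsum_comp_succ (cs : CoxeterSystem M W) {n : ℕ} (z : Fin (n + 1) → W) :
    lsum cs z = cs.length (z 0) + lsum cs (z ∘ Fin.succ) :=
  Fin.sum_univ_succ _

lemma lsum_comp_castSucc (cs : CoxeterSystem M W) {n : ℕ} (z : Fin (n + 1) → W) :
    lsum cs z = lsum cs (z ∘ Fin.castSucc) + cs.length (z (Fin.last n)) :=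
  Fin.sum_univ_castSucc _

end Aux

section Aux2
set_option linter.unusedSectionVars false

variable {B W : Type*} [Group W] {M : CoxeterMatrix B}

/-- Insert the pair `(a, b)` in place of the `p`-th entry of `x`. -/
def insTup {n : ℕ} (x : Fin n → W) (p : Fin n) (a b : W) : Fin (n + 1) → W :=
  fun k =>
    if h : (k : ℕ) < (p : ℕ) then x ⟨k, h.trans p.isLt⟩
    else if (k : ℕ) = (p : ℕ) then a
    else if (k : ℕ) = (p : ℕ) + 1 then b
    else x ⟨(k : ℕ) - 1, by have := k.isLt; omega⟩

lemma insTup_of_lt {n : ℕ} (x : Fin n → W) (p : Fin n) (a b : W) {k : Fin (n + 1)}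
    (h : (k : ℕ) < (p : ℕ)) : insTup x p a b k = x ⟨k, h.trans p.isLt⟩ := by
  rw [insTup]; rw [dif_pos h]

lemma insTup_of_eq {n : ℕ} (x : Fin n → W) (p : Fin n) (a b : W) {k : Fin (n + 1)}
    (h : (k : ℕ) = (p : ℕ)) : insTup x p a b k = a := by
  rw [insTup]; rw [dif_neg (by omega), if_pos h]

lemma insTup_of_eq_add_one {n : ℕ} (x : Fin n → W) (p : Fin n) (a b : W) {k : Fin (n + 1)}
    (h : (k : ℕ) = (p : ℕ) + 1) : insTup x p a b k = b := by
  rw [insTup]; rw [dif_neg (by omega), if_neg (by omega), if_pos h]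

lemma insTup_of_gt {n : ℕ} (x : Fin n → W) (p : Fin n) (a b : W) {k : Fin (n + 1)}
    (h : (p : ℕ) + 1 < (k : ℕ)) (hk : (k : ℕ) - 1 < n) :
    insTup x p a b k = x ⟨(k : ℕ) - 1, hk⟩ := by
  rw [insTup]; rw [dif_neg (by omega), if_neg (by omega), if_neg (by omega)]

lemma contract_insTup_self {n : ℕ} (x : Fin n → W) (p : Fin n) (a b : W)
    (hab : a * b = x p) : contract (insTup x p a b) p = x := by
  funext i
  rcases lt_trichotomy (i : ℕ) (p : ℕ) with h | h | h
  · rw [contract]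
    rw [if_pos (show (i : ℕ) < (p : ℕ) from h),
      insTup_of_lt x p a b (show ((i.castSucc : Fin (n+1)) : ℕ) < (p : ℕ) from h)]
    exact congrArg x (Fin.ext rfl)
  · have hip : i = p := Fin.ext h
    rw [contract]
    rw [if_neg (show ¬ (i : ℕ) < (p : ℕ) by omega), if_pos hip,
      insTup_of_eq x p a b (show ((i.castSucc : Fin (n+1)) : ℕ) = (p : ℕ) from h),
      insTup_of_eq_add_one x p a b (show ((i.succ : Fin (n+1)) : ℕ) = (p : ℕ) + 1 by
        simp [Fin.val_succ, h]), hab, hip]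
  · rw [contract]
    rw [if_neg (show ¬ (i : ℕ) < (p : ℕ) by omega),
      if_neg (show ¬ i = p by exact fun hc => by omega),
      insTup_of_gt x p a b (show (p : ℕ) + 1 < ((i.succ : Fin (n+1)) : ℕ) by
        simp only [Fin.val_succ]; omega) (by simp only [Fin.val_succ]; omega)]
    exact congrArg x (Fin.ext (by simp only [Fin.val_succ]; omega))

end Aux2

section Aux3
set_option linter.unusedSectionVars false

variable {B W : Type*} [Group W] {M : CoxeterMatrix B}

lemma eq_zero_of_entry_eq_one (cs : CoxeterSystem M W) {n : ℕ} (hn : 2 ≤ n)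
    {A : Type*} [AddCommGroup A] {ξ : (Fin n → W) → A} (hcol : Collapsing cs n ξ)
    (x : Fin n → W) (k : Fin n) (hk : x k = 1) : ξ x = 0 := by
  by_cases h : (k : ℕ) + 1 < n
  · exact hcol x k h (by rw [hk]; simp)
  · have hk1 : (k : ℕ) = n - 1 := by have := k.isLt; omega
    have hlt : (n : ℕ) - 2 < n := by omega
    have h2 : (((⟨n - 2, hlt⟩ : Fin n) : ℕ)) + 1 < n := show n - 2 + 1 < n by omega
    have he : (⟨((⟨n - 2, hlt⟩ : Fin n) : ℕ) + 1, h2⟩ : Fin n) = k :=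
      Fin.ext (show n - 2 + 1 = (k : ℕ) by omega)
    exact hcol x ⟨n - 2, hlt⟩ h2 (by rw [he, hk]; simp)

lemma eq_zero_of_all_simple (cs : CoxeterSystem M W) {n : ℕ} (hn : 2 ≤ n)
    {A : Type*} [AddCommGroup A] {ξ : (Fin n → W) → A} (hcol : Collapsing cs n ξ)
    (hs : ∀ i : B, ξ (fun _ => cs.simple i) = 0)
    (x : Fin n → W) (h1 : ∀ k : Fin n, cs.length (x k) = 1) : ξ x = 0 := by
  by_cases hadj : ∀ k : Fin n, ∀ h : (k : ℕ) + 1 < n, x k = x ⟨(k : ℕ) + 1, h⟩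
  · -- all entries equal; the common value is a simple reflection
    have hchain : ∀ m : ℕ, ∀ hm : m < n, x ⟨m, hm⟩ = x ⟨0, by omega⟩ := by
      intro m
      induction m with
      | zero => intro hm; rfl
      | succ m ih =>
        intro hm
        have hm' : m < n := by omega
        rw [← ih hm', hadj ⟨m, hm'⟩ hm]
    obtain ⟨i, hi⟩ := (cs.length_eq_one_iff).mp (h1 ⟨0, by omega⟩)
    have hx : x = fun _ => cs.simple i := by
      funext k
      have := hchain (k : ℕ) k.isLt
      rw [Fin.eta] at this
      rw [this, hi]
    rw [hx]; exact hs i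
  · push_neg at hadj
    obtain ⟨k, hk, hne⟩ := hadj
    apply hcol x k hk
    rw [h1 k, h1 ⟨(k : ℕ) + 1, hk⟩]
    -- length of product of two distinct simple-length elements is 2
    have hle := cs.length_mul_le (x k) (x ⟨(k : ℕ) + 1, hk⟩)
    have hmod := cs.length_mul_mod_two (x k) (x ⟨(k : ℕ) + 1, hk⟩)
    rw [h1 k, h1 ⟨(k : ℕ) + 1, hk⟩] at hle hmod
    have hne0 : cs.length (x k * x ⟨(k : ℕ) + 1, hk⟩) ≠ 0 := by
      intro hc
      rw [cs.length_eq_zero_iff] at hc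
      obtain ⟨i, hi⟩ := (cs.length_eq_one_iff).mp (h1 k)
      apply hne
      have hv : x ⟨(k : ℕ) + 1, hk⟩ = (x k)⁻¹ := by
        rw [eq_comm, inv_eq_iff_mul_eq_one]; exact hc
      rw [hv, hi, cs.inv_simple]
    omega

end Aux3

section Aux4
set_option linter.unusedSectionVars false

variable {B W : Type*} [Group W] {M : CoxeterMatrix B}

lemma contract_of_lt {n : ℕ} (z : Fin (n + 1) → W) (j : Fin n) {i : Fin n}
    (h : (i : ℕ) < (j : ℕ)) : contract z j i = z i.castSucc := by
  rw [contract]; rw [if_pos h]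

lemma contract_of_eq {n : ℕ} (z : Fin (n + 1) → W) (j : Fin n) {i : Fin n}
    (h : i = j) : contract z j i = z i.castSucc * z i.succ := by
  subst h; rw [contract]; rw [if_neg (lt_irrefl _), if_pos rfl]

lemma contract_of_gt {n : ℕ} (z : Fin (n + 1) → W) (j : Fin n) {i : Fin n}
    (h : (j : ℕ) < (i : ℕ)) : contract z j i = z i.succ := by
  rw [contract]
  rw [if_neg (by omega), if_neg (fun hc => by rw [hc] at h; exact lt_irrefl _ h)]

lemma key_step (cs : CoxeterSystem M W) {n : ℕ} (hn : 2 ≤ n)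
    {A : Type*} [AddCommGroup A] [DistribMulAction W A]
    {ξ : (Fin n → W) → A} (hcoc : IsCocycleM n ξ) (hcol : Collapsing cs n ξ)
    (N : ℕ) (x : Fin n → W) (hSx : lsum cs x = N)
    (p : Fin n) (i₀ : B)
    (hbig : 2 ≤ cs.length (x p))
    (hdesc : cs.length (cs.simple i₀ * x p) + 1 = cs.length (x p))
    (hprev : ∀ k : Fin n, (k : ℕ) + 1 = (p : ℕ) → x k = cs.simple i₀)
    (hmin : ∀ k : Fin n, (k : ℕ) < (p : ℕ) → cs.length (x k) = 1)
    (hno1 : ∀ k : Fin n, x k ≠ 1)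
    (H : ∀ w : Fin n → W, lsum cs w < N → ξ w = 0)
    (Hd : ∀ w : Fin n → W, lsum cs w = N →
      (∀ k : Fin n, (k : ℕ) ≤ (p : ℕ) → cs.length (w k) = 1) → ξ w = 0) :
    ξ x = 0 := by
  obtain ⟨y, hsy, hLy⟩ : ∃ y, cs.simple i₀ * y = x p ∧ cs.length y + 1 = cs.length (x p) :=
    ⟨cs.simple i₀ * x p, cs.simple_mul_simple_cancel_left i₀, hdesc⟩
  set z := insTup x p (cs.simple i₀) y with hzdef
  have hy1 : 1 ≤ cs.length y := by omega
  have hzlt : ∀ (k : Fin (n + 1)) (h : (k : ℕ) < (p : ℕ)), z k = x ⟨k, h.trans p.isLt⟩ :=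
    fun k h => insTup_of_lt x p (cs.simple i₀) y h
  have hzp : ∀ (k : Fin (n + 1)), (k : ℕ) = (p : ℕ) → z k = cs.simple i₀ :=
    fun k h => insTup_of_eq x p (cs.simple i₀) y h
  have hzp1 : ∀ (k : Fin (n + 1)), (k : ℕ) = (p : ℕ) + 1 → z k = y :=
    fun k h => insTup_of_eq_add_one x p (cs.simple i₀) y h
  have hzgt : ∀ (k : Fin (n + 1)) (h : (p : ℕ) + 1 < (k : ℕ)) (hk : (k : ℕ) - 1 < n),
      z k = x ⟨(k : ℕ) - 1, hk⟩ :=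
    fun k h hk => insTup_of_gt x p (cs.simple i₀) y h hk
  have hctr : contract z p = x := contract_insTup_self x p (cs.simple i₀) y hsy
  have hSz : lsum cs z = N := by
    have h3 := lsum_contract cs z p
    rw [hctr, hzp p.castSucc rfl, hzp1 p.succ rfl, hsy, cs.length_simple] at h3
    omega
  have hhead : ξ (z ∘ Fin.succ) = 0 := by
    apply H
    have h4 := lsum_comp_succ cs z
    have hz0 : cs.length (z 0) = 1 := by
      rcases Nat.eq_zero_or_pos (p : ℕ) with h | h
      · rw [hzp 0 (by simp only [Fin.val_zero]; omega)]
        exact cs.length_simple i₀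
      · rw [hzlt 0 (show ((0 : Fin (n + 1)) : ℕ) < (p : ℕ) by
          simp only [Fin.val_zero]; omega)]
        exact hmin _ (by simpa using h)
    omega
  have htail : ξ (z ∘ Fin.castSucc) = 0 := by
    apply H
    have h4 := lsum_comp_castSucc cs z
    have hzl : 1 ≤ cs.length (z (Fin.last n)) := by
      rcases Nat.lt_or_ge ((p : ℕ) + 1) n with h | h
      · rw [hzgt (Fin.last n) (show (p : ℕ) + 1 < n from h) (show n - 1 < n by omega)]
        exact Nat.one_le_iff_ne_zero.mpr
          (fun hc => hno1 _ (cs.length_eq_zero_iff.mp hc))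
      · have hpn : (p : ℕ) + 1 = n := by have := p.isLt; omega
        rw [hzp1 (Fin.last n) (show (n : ℕ) = (p : ℕ) + 1 by omega)]
        omega
    omega
  have hbr : ∀ j : Fin n, j ≠ p → ξ (contract z j) = 0 := by
    intro j hj
    rcases lt_trichotomy (j : ℕ) (p : ℕ) with hlt | heq | hgt
    · rcases Nat.lt_or_ge ((j : ℕ) + 1) (p : ℕ) with h2 | h2
      · -- j + 1 < p : pair (y-predecessor) (s, y) sits at (p-1, p); collapsing
        have hp1 : (p : ℕ) - 1 < n := by have := p.isLt; omega
        have hpp : ((⟨(p : ℕ) - 1, hp1⟩ : Fin n) : ℕ) + 1 < n :=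
          show (p : ℕ) - 1 + 1 < n by have := p.isLt; omega
        apply hcol (contract z j) ⟨(p : ℕ) - 1, hp1⟩ hpp
        have e1 : contract z j ⟨(p : ℕ) - 1, hp1⟩ = cs.simple i₀ := by
          rw [contract_of_gt z j (show (j : ℕ) < (p : ℕ) - 1 by omega),
            hzp _ (show (p : ℕ) - 1 + 1 = (p : ℕ) by omega)]
        have e2 : contract z j ⟨((⟨(p : ℕ) - 1, hp1⟩ : Fin n) : ℕ) + 1, hpp⟩ = y := by
          rw [contract_of_gt z j (show (j : ℕ) < (p : ℕ) - 1 + 1 by omega),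
            hzp1 _ (show (p : ℕ) - 1 + 1 + 1 = (p : ℕ) + 1 by omega)]
        rw [e1, e2, hsy, cs.length_simple]
        omega
      · -- j + 1 = p : the contracted entry is simple * simple = 1
        have h3 : (j : ℕ) + 1 = (p : ℕ) := by omega
        apply eq_zero_of_entry_eq_one cs hn hcol _ j
        have H1 : ((j.castSucc : Fin (n+1)) : ℕ) < (p : ℕ) := hlt
        rw [contract_of_eq z j rfl, hzlt j.castSucc H1,
          hzp j.succ (show (j : ℕ) + 1 = (p : ℕ) from h3),
          hprev ⟨((j.castSucc : Fin (n+1)) : ℕ), H1.trans p.isLt⟩ h3]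
        exact cs.simple_mul_simple_self i₀
    · exact absurd (Fin.ext heq) hj
    · rcases Nat.lt_or_ge ((p : ℕ) + 1) (j : ℕ) with h2 | h2
      · -- j > p + 1 : (s, y) sits at (p, p+1); collapsing
        have hpp : (p : ℕ) + 1 < n := by have := j.isLt; omega
        apply hcol (contract z j) p hpp
        have e1 : contract z j p = cs.simple i₀ := by
          rw [contract_of_lt z j hgt, hzp _ rfl]
        have e2 : contract z j ⟨(p : ℕ) + 1, hpp⟩ = y := by
          rw [contract_of_lt z j (show ((p : ℕ) + 1 : ℕ) < (j : ℕ) from h2), hzp1 _ rfl]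
        rw [e1, e2, hsy, cs.length_simple]
        omega
      · -- j = p + 1 : the hard branch, use the inductive hypotheses
        have h3 : (j : ℕ) = (p : ℕ) + 1 := by omega
        have h4 := lsum_contract cs z j
        have hjc : z j.castSucc = y := hzp1 j.castSucc (show (j : ℕ) = (p : ℕ) + 1 from h3)
        have hjs : z j.succ = x j := by
          rw [hzgt j.succ (show (p : ℕ) + 1 < (j : ℕ) + 1 by omega)
            (show (j : ℕ) + 1 - 1 < n by have := j.isLt; omega)]
          exact congrArg x (Fin.ext (by simp [Fin.val_succ]))
        rw [hjc, hjs, hSz] at h4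
        have hle := cs.length_mul_le y (x j)
        rcases Nat.lt_or_ge (lsum cs (contract z j)) N with h5 | h5
        · exact H _ h5
        · have h6 : lsum cs (contract z j) = N := by omega
          apply Hd _ h6
          intro k hk
          rcases Nat.lt_or_ge (k : ℕ) (p : ℕ) with h7 | h7
          · rw [contract_of_lt z j (show (k : ℕ) < (j : ℕ) by omega),
              hzlt k.castSucc (show ((k.castSucc : Fin (n+1)) : ℕ) < (p : ℕ) from h7)]
            exact hmin _ h7
          · have h8 : (k : ℕ) = (p : ℕ) := by omega
            rw [contract_of_lt z j (show (k : ℕ) < (j : ℕ) by omega),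
              hzp k.castSucc (show (k : ℕ) = (p : ℕ) from h8)]
            exact cs.length_simple i₀
  have hc := hcoc z
  have hsum : ∑ j : Fin n, ((-1 : ℤ) ^ ((j : ℕ) + 1)) • ξ (contract z j)
      = ((-1 : ℤ) ^ ((p : ℕ) + 1)) • ξ (contract z p) :=
    Finset.sum_eq_single p (fun j _ hj => by rw [hbr j hj, smul_zero])
      (fun h => absurd (Finset.mem_univ p) h)
  rw [hsum, hctr, hhead, htail, smul_zero, smul_zero, zero_add, add_zero] at hc
  exact neg_one_pow_zsmul_eq_zero hc

end Aux4


/-- Let `ξ ∈ Zⁿ(W, A)` be a collapsing `n`-cocycle (`n ≥ 2`) valued in a `ℤ[W]`-module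
`A` such that `ξ(s, …, s) = 0` for all simple reflections `s`.  Then `ξ` is identically
zero. -/
theorem collapsing_cocycle_eq_zero (cs : CoxeterSystem M W) (n : ℕ) (hn : 2 ≤ n)
    {A : Type*} [AddCommGroup A] [DistribMulAction W A]
    (ξ : (Fin n → W) → A) (hcoc : IsCocycleM n ξ) (hcol : Collapsing cs n ξ)
    (hs : ∀ i : B, ξ (fun _ => cs.simple i) = 0) :
    ∀ x : Fin n → W, ξ x = 0 := by
  have main : ∀ N : ℕ, ∀ x : Fin n → W, lsum cs x ≤ N → ξ x = 0 := by
    intro N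
    induction N using Nat.strong_induction_on with
    | _ N H =>
    have H' : ∀ w : Fin n → W, lsum cs w < N → ξ w = 0 := fun w hw =>
      H (lsum cs w) hw w le_rfl
    have T : ∀ d : ℕ, ∀ x : Fin n → W, lsum cs x = N →
        (∀ k : Fin n, (k : ℕ) + d + 1 ≤ n → cs.length (x k) = 1) → ξ x = 0 := by
      intro d
      induction d with
      | zero =>
        intro x hSx hpre
        exact eq_zero_of_all_simple cs hn hcol hs x
          (fun k => hpre k (by have := k.isLt; omega))
      | succ d ihd =>
        intro x hSx hpre
        by_cases h1 : ∃ k, x k = 1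
        · obtain ⟨k, hk⟩ := h1
          exact eq_zero_of_entry_eq_one cs hn hcol x k hk
        push_neg at h1
        by_cases hall : ∀ k : Fin n, cs.length (x k) ≤ 1
        · refine eq_zero_of_all_simple cs hn hcol hs x (fun k => ?_)
          have h2 := hall k
          have h0 : cs.length (x k) ≠ 0 := by
            rw [Ne, cs.length_eq_zero_iff]; exact h1 k
          omega
        push_neg at hall
        obtain ⟨k0, hk0⟩ := hall
        have hk0' : 2 ≤ cs.length (x k0) := hk0
        set F := Finset.univ.filter (fun k : Fin n => 2 ≤ cs.length (x k)) with hF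
        have hFne : F.Nonempty := ⟨k0, by simp [hF]; omega⟩
        set p := F.min' hFne with hpdef
        have hbig : 2 ≤ cs.length (x p) :=
          (Finset.mem_filter.mp (F.min'_mem hFne)).2
        have hmin : ∀ k : Fin n, (k : ℕ) < (p : ℕ) → cs.length (x k) = 1 := by
          intro k hk
          have h0 : cs.length (x k) ≠ 0 := by
            rw [Ne, cs.length_eq_zero_iff]; exact h1 k
          by_contra hc
          have h2 : 2 ≤ cs.length (x k) := by omega
          have h3 : p ≤ k := F.min'_le k (by simp [hF]; omega)
          rw [Fin.le_def] at h3
          omega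
        have hno1 : ∀ k : Fin n, x k ≠ 1 := h1
        -- from the prefix hypothesis, p is late enough
        have hpd : n ≤ (p : ℕ) + d + 1 := by
          by_contra hc
          have := hpre p (by omega)
          omega
        have Hd : ∀ w : Fin n → W, lsum cs w = N →
            (∀ k : Fin n, (k : ℕ) ≤ (p : ℕ) → cs.length (w k) = 1) → ξ w = 0 := by
          intro w hw hwp
          exact ihd w hw (fun k hk => hwp k (by omega))
        -- choose the simple reflection
        by_cases hp0 : (p : ℕ) = 0
        · obtain ⟨i₀, hi₀⟩ := cs.exists_leftDescent_of_ne_one (h1 p)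
          rw [cs.isLeftDescent_iff] at hi₀
          exact key_step cs hn hcoc hcol N x hSx p i₀ hbig hi₀
            (fun k hk => absurd hk (by omega)) hmin hno1 H' Hd
        · have hplt : (p : ℕ) - 1 < n := by have := p.isLt; omega
          have hk1 : cs.length (x ⟨(p : ℕ) - 1, hplt⟩) = 1 :=
            hmin ⟨(p : ℕ) - 1, hplt⟩ (show (p : ℕ) - 1 < (p : ℕ) by omega)
          obtain ⟨i₀, hi₀⟩ := cs.length_eq_one_iff.mp hk1
          by_cases hdes : cs.length (cs.simple i₀ * x p) + 1 = cs.length (x p)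
          · exact key_step cs hn hcoc hcol N x hSx p i₀ hbig hdes
              (fun k hk => by
                have : k = (⟨(p : ℕ) - 1, hplt⟩ : Fin n) := Fin.ext (show (k : ℕ) = (p : ℕ) - 1 by omega)
                rw [this, hi₀])
              hmin hno1 H' Hd
          · -- not a descent: x collapses at the pair (p-1, p)
            have hadd : cs.length (cs.simple i₀ * x p) = cs.length (x p) + 1 :=
              (cs.length_simple_mul (x p) i₀).resolve_right hdes
            have hpp : ((⟨(p : ℕ) - 1, hplt⟩ : Fin n) : ℕ) + 1 < n :=
              show (p : ℕ) - 1 + 1 < n by have := p.isLt; omega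
            apply hcol x ⟨(p : ℕ) - 1, hplt⟩ hpp
            have he : (⟨((⟨(p : ℕ) - 1, hplt⟩ : Fin n) : ℕ) + 1, hpp⟩ : Fin n) = p :=
              Fin.ext (show (p : ℕ) - 1 + 1 = (p : ℕ) by omega)
            rw [he, hi₀, hadd, cs.length_simple]
            omega
    intro x hSx
    rcases Nat.lt_or_ge (lsum cs x) N with h | h
    · exact H' x h
    · exact T n x (by omega) (fun k hk => by have := k.isLt; omega)
  exact fun x => main (lsum cs x) x le_rfl
end

section
/- For all $x, y \in W$, $\epsilon_2^W(x,y) = \frac{1}{2}(|x| + |y| - |xy|) \in \mathbb{Z}$. In particular, $|x| + |y| - |xy|$ is always even, $\epsilon_2^W$ is a $\mathbb{Z}$-valued 2-cocycle, and it vanishes exactly when lengths add. -/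
open CoxeterSystem

variable {B W : Type*} [Group W] {M : CoxeterMatrix B}

/-- `ε₂^W(x,y)`: the number of walls `H` such that `(C₀, xC₀, xyC₀)` is
`H`-alternating, i.e. the number of reflections `t ∈ 𝐓_x ∩ x𝐓_y`. -/
noncomputable def epsTwo (cs : CoxeterSystem M W) (x y : W) : ℤ :=
  (({t : W | cs.IsLeftInversion x t} ∩
    {t : W | cs.IsLeftInversion y (x⁻¹ * t * x)}).ncard : ℤ)

open scoped Classical

namespace EpsAux

@[ext] structure NG (W : Type*) [Group W] where
  el : W
  f : W → ZMod 2

variable {W : Type*} [Group W]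

instance : Mul (NG W) := ⟨fun a b => ⟨a.el * b.el, fun t => a.f t + b.f (a.el⁻¹ * t * a.el)⟩⟩
instance : One (NG W) := ⟨⟨1, 0⟩⟩
instance : Inv (NG W) := ⟨fun a => ⟨a.el⁻¹, fun t => a.f (a.el * t * a.el⁻¹)⟩⟩

@[simp] lemma mul_el (a b : NG W) : (a * b).el = a.el * b.el := rfl
@[simp] lemma mul_f (a b : NG W) (t : W) : (a * b).f t = a.f t + b.f (a.el⁻¹ * t * a.el) := rfl
@[simp] lemma one_el : (1 : NG W).el = 1 := rfl
@[simp] lemma one_f (t : W) : (1 : NG W).f t = 0 := rfl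
@[simp] lemma inv_el (a : NG W) : (a⁻¹).el = a.el⁻¹ := rfl
@[simp] lemma inv_f (a : NG W) (t : W) : (a⁻¹).f t = a.f (a.el * t * a.el⁻¹) := rfl

lemma two_eq_zero : ∀ x : ZMod 2, x + x = 0 := by decide

instance : Group (NG W) where
  mul_assoc a b c := by
    ext t
    · simp [mul_assoc]
    · simp [mul_assoc, mul_inv_rev, add_assoc]
  one_mul a := by ext t <;> simp
  mul_one a := by ext t <;> simp
  inv_mul_cancel a := by
    ext t
    · simp
    · have h : (a.el⁻¹)⁻¹ * t * a.el⁻¹ = a.el * t * a.el⁻¹ := by group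
      simp [h, two_eq_zero]

lemma pow_el (a : NG W) (n : ℕ) : (a ^ n).el = a.el ^ n := by
  induction n with
  | zero => rw [pow_zero, pow_zero, one_el]
  | succ n ih => rw [pow_succ, pow_succ, mul_el, ih]

lemma pow_f (a : NG W) (n : ℕ) (t : W) :
    (a ^ n).f t = ∑ k ∈ Finset.range n, a.f ((a.el ^ k)⁻¹ * t * a.el ^ k) := by
  induction n with
  | zero => rw [pow_zero]; simp
  | succ n ih => rw [pow_succ, mul_f, ih, pow_el, Finset.sum_range_succ]

lemma conj_eq_iff (u v t : W) : u⁻¹ * t * u = v ↔ t = u * v * u⁻¹ := by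
  constructor
  · intro h; rw [← h]; group
  · intro h; rw [h]; group

section Dihedral

variable {a b : W}

lemma haux (ha : a * a = 1) (X Y : W) : (a * X * a) * (a * Y * a) = a * (X * Y) * a := by
  have h : a * X * a * (a * Y * a) = a * X * (a * a) * (Y * a) := by group
  rw [h, ha]; group

lemma conj_pow_self (ha : a * a = 1) (hb : b * b = 1) (n : ℕ) :
    a * (a * b) ^ n * a = ((a * b) ^ n)⁻¹ := by
  induction n with
  | zero => simpa using ha
  | succ n ih =>
    rw [pow_succ, ← haux ha, ih]
    have hab : a * (a * b) * a = ((a * b))⁻¹ := by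
      rw [mul_inv_rev, inv_eq_of_mul_eq_one_right ha, inv_eq_of_mul_eq_one_right hb]
      calc a * (a * b) * a = (a * a) * (b * a) := by group
        _ = b * a := by rw [ha]; group
    rw [hab, ← mul_inv_rev, ← pow_succ', ← pow_succ]

lemma conj_pow_eq (ha : a * a = 1) (hb : b * b = 1) {r : ℕ} (h2r : (a * b) ^ (2 * r) = 1) :
    (a * b) ^ r * a * ((a * b) ^ r)⁻¹ = a := by
  have h := conj_pow_self ha hb (W := W) r
  calc (a * b) ^ r * a * ((a * b) ^ r)⁻¹
      = (a * b) ^ r * a * (a * (a * b) ^ r * a) := by rw [h]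
    _ = (a * b) ^ r * (a * a) * (a * b) ^ r * a := by group
    _ = (a * b) ^ (r + r) * a := by rw [ha]; rw [pow_add]; group
    _ = a := by rw [show r + r = 2 * r by ring, h2r]; group

end Dihedral

lemma pow_mul_inv_comm (x : W) (r : ℕ) : x ^ r * x⁻¹ * (x ^ r)⁻¹ = x⁻¹ := by
  have h : x⁻¹ * x ^ r = x ^ r * x⁻¹ := (((Commute.refl x).pow_right r).inv_left).eq
  rw [← h]; group

lemma conj_pow_aba_even {a b : W} (ha : a * a = 1) (hb : b * b = 1) {r : ℕ}
    (h2r : (a * b) ^ (2 * r) = 1) :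
    (a * b) ^ r * (a * b * a) * ((a * b) ^ r)⁻¹ = a * b * a := by
  have h1 := conj_pow_eq ha hb h2r
  have pinv : b * a = (a * b)⁻¹ := by
    rw [mul_inv_rev, inv_eq_of_mul_eq_one_right ha, inv_eq_of_mul_eq_one_right hb]
  calc (a * b) ^ r * (a * b * a) * ((a * b) ^ r)⁻¹
      = ((a * b) ^ r * a * ((a * b) ^ r)⁻¹) * ((a * b) ^ r * (b * a) * ((a * b) ^ r)⁻¹) := by
        group
    _ = a * ((a * b) ^ r * (a * b)⁻¹ * ((a * b) ^ r)⁻¹) := by rw [h1, pinv]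
    _ = a * (a * b)⁻¹ := by rw [pow_mul_inv_comm]
    _ = a * (b * a) := by rw [← pinv]
    _ = a * b * a := by group

lemma conj_pow_aba_odd {a b : W} (ha : a * a = 1) (hb : b * b = 1) {r : ℕ}
    (hm : (a * b) ^ (2 * r + 1) = 1) :
    (a * b) ^ (r + 1) * a * ((a * b) ^ (r + 1))⁻¹ = a * b * a := by
  have hc := conj_pow_self ha hb (W := W) (b := b) (r + 1)
  calc (a * b) ^ (r + 1) * a * ((a * b) ^ (r + 1))⁻¹
      = (a * b) ^ (r + 1) * a * (a * (a * b) ^ (r + 1) * a) := by rw [hc]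
    _ = (a * b) ^ (r + 1) * (a * a) * ((a * b) ^ (r + 1) * a) := by group
    _ = (a * b) ^ (r + 1) * (a * b) ^ (r + 1) * a := by rw [ha]; group
    _ = (a * b) ^ ((r + 1) + (r + 1)) * a := by rw [← pow_add]
    _ = (a * b) ^ ((2 * r + 1) + 1) * a := by rw [show (r + 1) + (r + 1) = (2 * r + 1) + 1 by omega]
    _ = (a * b) ^ (2 * r + 1) * ((a * b) * a) := by rw [pow_succ, mul_assoc]
    _ = a * b * a := by rw [hm, one_mul]

lemma sum_shift {m : ℕ} (g : ℕ → ZMod 2) (hper : ∀ k, g (k + m) = g k) (c : ℕ) :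
    ∑ k ∈ Finset.range m, g (k + c) = ∑ k ∈ Finset.range m, g k := by
  induction c with
  | zero => simp
  | succ c ih =>
    have h1 : ∑ k ∈ Finset.range (m + 1), g (k + c)
        = (∑ k ∈ Finset.range m, g ((k + 1) + c)) + g (0 + c) := Finset.sum_range_succ' _ _
    have h2 : ∑ k ∈ Finset.range (m + 1), g (k + c)
        = (∑ k ∈ Finset.range m, g (k + c)) + g (m + c) := Finset.sum_range_succ _ _
    have h3 : g (m + c) = g (0 + c) := by rw [zero_add, Nat.add_comm m c, hper]
    have h4 : (∑ k ∈ Finset.range m, g ((k + 1) + c)) = ∑ k ∈ Finset.range m, g (k + c) := by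
      have := h1.symm.trans h2
      rw [h3] at this
      exact add_right_cancel this
    calc ∑ k ∈ Finset.range m, g (k + (c + 1))
        = ∑ k ∈ Finset.range m, g ((k + 1) + c) := by
          apply Finset.sum_congr rfl; intro k _; congr 1; omega
      _ = ∑ k ∈ Finset.range m, g (k + c) := h4
      _ = ∑ k ∈ Finset.range m, g k := ih

lemma sum_half {r : ℕ} (g : ℕ → ZMod 2) (hhalf : ∀ k, g (k + r) = g k) :
    ∑ k ∈ Finset.range (2 * r), g k = 0 := by
  rw [two_mul, Finset.sum_range_add]
  have : ∀ k, g (r + k) = g k := fun k => by rw [Nat.add_comm, hhalf]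
  rw [Finset.sum_congr rfl (fun k _ => this k)]
  exact two_eq_zero _

section Cox

open CoxeterSystem

variable {B : Type*} {M : CoxeterMatrix B} (cs : CoxeterSystem M W)

/-- the generator of the reflection-cocycle homomorphism -/
noncomputable def gen (i : B) : NG W := ⟨cs.simple i, fun t => if t = cs.simple i then 1 else 0⟩

theorem liftable : M.IsLiftable (gen cs) := by
  intro i j
  set a := cs.simple i with hadef
  set b := cs.simple j with hbdef
  have ha : a * a = 1 := cs.simple_mul_simple_self i
  have hb : b * b = 1 := cs.simple_mul_simple_self j
  have hainv : a⁻¹ = a := inv_eq_of_mul_eq_one_right ha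
  set m := M i j with hm
  have hmul : (a * b) ^ m = 1 := cs.simple_mul_simple_pow i j
  have hgel : (gen cs i * gen cs j).el = a * b := rfl
  ext
  case el => rw [pow_el, hgel, one_el]; exact hmul
  case f t =>
    rw [pow_f, one_f, hgel]
    set p : W := a * b with hp
    set g : ℕ → ZMod 2 := fun k => if t = p ^ k * a * (p ^ k)⁻¹ then 1 else 0 with hg
    set g' : ℕ → ZMod 2 := fun k => if t = p ^ k * (a * b * a) * (p ^ k)⁻¹ then 1 else 0 with hg'
    have summand : ∀ k, (gen cs i * gen cs j).f ((p ^ k)⁻¹ * t * p ^ k) = g k + g' k := by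
      intro k
      have e1 : ((p ^ k)⁻¹ * t * p ^ k = a) ↔ (t = p ^ k * a * (p ^ k)⁻¹) := conj_eq_iff _ _ _
      have e2' : a⁻¹ * ((p ^ k)⁻¹ * t * p ^ k) * a = (p ^ k * a)⁻¹ * t * (p ^ k * a) := by group
      have e2 : (a⁻¹ * ((p ^ k)⁻¹ * t * p ^ k) * a = b)
          ↔ (t = p ^ k * (a * b * a) * (p ^ k)⁻¹) := by
        rw [e2', conj_eq_iff]
        constructor <;> intro h <;> rw [h] <;> rw [mul_inv_rev, hainv] <;> group
      show (if (p ^ k)⁻¹ * t * p ^ k = a then (1 : ZMod 2) else 0)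
          + (if a⁻¹ * ((p ^ k)⁻¹ * t * p ^ k) * a = b then (1 : ZMod 2) else 0) = g k + g' k
      rw [if_congr e1 rfl rfl, if_congr e2 rfl rfl]
    rw [Finset.sum_congr rfl (fun k _ => summand k), Finset.sum_add_distrib]
    have hgper : ∀ k, g (k + m) = g k := by
      intro k
      have : p ^ (k + m) = p ^ k := by rw [pow_add, hmul, mul_one]
      simp only [hg, this]
    rcases Nat.even_or_odd m with he | ho
    · obtain ⟨r, hr⟩ := he
      have h2r : p ^ (2 * r) = 1 := by rw [← hmul]; congr 1; omega
      have hghalf : ∀ k, g (k + r) = g k := by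
        intro k
        have harg : p ^ (k + r) * a * (p ^ (k + r))⁻¹
            = p ^ k * (p ^ r * a * (p ^ r)⁻¹) * (p ^ k)⁻¹ := by rw [pow_add]; group
        have : p ^ (k + r) * a * (p ^ (k + r))⁻¹ = p ^ k * a * (p ^ k)⁻¹ := by
          rw [harg, conj_pow_eq ha hb h2r]
        simp only [hg, this]
      have hg'half : ∀ k, g' (k + r) = g' k := by
        intro k
        have harg : p ^ (k + r) * (a * b * a) * (p ^ (k + r))⁻¹
            = p ^ k * (p ^ r * (a * b * a) * (p ^ r)⁻¹) * (p ^ k)⁻¹ := by rw [pow_add]; group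
        have : p ^ (k + r) * (a * b * a) * (p ^ (k + r))⁻¹
            = p ^ k * (a * b * a) * (p ^ k)⁻¹ := by
          rw [harg, conj_pow_aba_even ha hb h2r]
        simp only [hg', this]
      have hmr : m = 2 * r := by omega
      rw [hmr, sum_half g hghalf, sum_half g' hg'half]
      simp
    · obtain ⟨r, hr⟩ := ho
      have hmr : m = 2 * r + 1 := hr
      have hmo : p ^ (2 * r + 1) = 1 := by rw [← hmr]; exact hmul
      have hg'g : ∀ k, g' k = g (k + (r + 1)) := by
        intro k
        have harg : p ^ (k + (r + 1)) * a * (p ^ (k + (r + 1)))⁻¹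
            = p ^ k * (p ^ (r + 1) * a * (p ^ (r + 1))⁻¹) * (p ^ k)⁻¹ := by rw [pow_add]; group
        have : p ^ (k + (r + 1)) * a * (p ^ (k + (r + 1)))⁻¹
            = p ^ k * (a * b * a) * (p ^ k)⁻¹ := by
          rw [harg, conj_pow_aba_odd ha hb hmo]
        simp only [hg, hg', this]
      rw [Finset.sum_congr rfl (fun k _ => hg'g k), sum_shift g hgper (r + 1)]
      exact two_eq_zero _

noncomputable def NN : W →* NG W := cs.lift ⟨gen cs, liftable cs⟩

lemma NN_simple (i : B) : NN cs (cs.simple i) = gen cs i :=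
  cs.lift_apply_simple (liftable cs) i

lemma NN_el (w : W) : (NN cs w).el = w := by
  apply cs.simple_induction_left w
  · rw [map_one, one_el]
  · intro w i h
    rw [map_mul, mul_el, NN_simple, h]; rfl

noncomputable def Nf (w : W) : W → ZMod 2 := (NN cs w).f

lemma Nf_mul (u v t : W) : Nf cs (u * v) t = Nf cs u t + Nf cs v (u⁻¹ * t * u) := by
  unfold Nf; rw [map_mul, mul_f, NN_el]

lemma Nf_one (t : W) : Nf cs 1 t = 0 := by unfold Nf; rw [map_one]; rfl

lemma Nf_simple (i : B) (t : W) :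
    Nf cs (cs.simple i) t = if t = cs.simple i then 1 else 0 := by
  unfold Nf; rw [NN_simple]; rfl

lemma zmod_cancel : ∀ x y : ZMod 2, x + y = 0 → y = x := by decide

lemma Nf_inv (u y : W) : Nf cs u⁻¹ y = Nf cs u (u * y * u⁻¹) := by
  have h : Nf cs (u * u⁻¹) (u * y * u⁻¹)
      = Nf cs u (u * y * u⁻¹) + Nf cs u⁻¹ (u⁻¹ * (u * y * u⁻¹) * u) := Nf_mul cs _ _ _
  rw [mul_inv_cancel, Nf_one] at h
  have e : u⁻¹ * (u * y * u⁻¹) * u = y := by group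
  rw [e] at h
  exact zmod_cancel _ _ h.symm

lemma Nf_eq_count (ω : List B) (t : W) :
    Nf cs (cs.wordProd ω) t = ((cs.leftInvSeq ω).count t : ZMod 2) := by
  induction ω generalizing t with
  | nil => rw [cs.wordProd_nil]; simp [Nf_one]
  | cons i ω ih =>
    rw [cs.wordProd_cons, Nf_mul, Nf_simple, ih]
    have hlis : cs.leftInvSeq (i :: ω)
        = cs.simple i :: List.map (⇑(MulAut.conj (cs.simple i))) (cs.leftInvSeq ω) := rfl
    have hσ : (⇑(MulAut.conj (cs.simple i))) ((cs.simple i)⁻¹ * t * cs.simple i) = t := by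
      simp only [MulAut.conj_apply]; group
    have hcnt : (List.map (⇑(MulAut.conj (cs.simple i))) (cs.leftInvSeq ω)).count t
        = (cs.leftInvSeq ω).count ((cs.simple i)⁻¹ * t * cs.simple i) := by
      conv_lhs => rw [← hσ]
      exact List.count_map_of_injective _ _ (MulAut.conj (cs.simple i)).injective _
    rw [hlis, List.count_cons, hcnt]
    push_cast
    simp only [beq_iff_eq]
    have hcc : (cs.simple i = t) ↔ (t = cs.simple i) := eq_comm
    rw [if_congr hcc rfl rfl, add_comm]

lemma isLeftInversion_of_Nf_eq_one {w t : W} (h : Nf cs w t = 1) :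
    cs.IsLeftInversion w t := by
  obtain ⟨ω, hred, hw⟩ := cs.exists_reduced_word' w
  rw [hw, Nf_eq_count] at h
  have hne : (cs.leftInvSeq ω).count t ≠ 0 := by
    intro h0; rw [h0] at h; simp at h
  have hmem : t ∈ cs.leftInvSeq ω := List.count_pos_iff.1 (Nat.pos_of_ne_zero hne)
  rw [hw]
  exact cs.isLeftInversion_of_mem_leftInvSeq hred hmem

lemma zmod_aab : ∀ x : ZMod 2, x + (1 + x) = 1 := by decide

lemma Nf_self_refl {t : W} (h : cs.IsReflection t) : Nf cs t t = 1 := by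
  obtain ⟨u, i, rfl⟩ := h
  have e0 : u * cs.simple i * u⁻¹ = u * (cs.simple i * u⁻¹) := mul_assoc _ _ _
  have e1 : Nf cs (u * (cs.simple i * u⁻¹)) (u * cs.simple i * u⁻¹)
      = Nf cs u (u * cs.simple i * u⁻¹)
        + Nf cs (cs.simple i * u⁻¹) (u⁻¹ * (u * cs.simple i * u⁻¹) * u) := Nf_mul cs _ _ _
  have earg1 : u⁻¹ * (u * cs.simple i * u⁻¹) * u = cs.simple i := by group
  have e2 : Nf cs (cs.simple i * u⁻¹) (cs.simple i)
      = Nf cs (cs.simple i) (cs.simple i)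
        + Nf cs u⁻¹ ((cs.simple i)⁻¹ * cs.simple i * cs.simple i) := Nf_mul cs _ _ _
  have earg2 : (cs.simple i)⁻¹ * cs.simple i * cs.simple i = cs.simple i := by group
  have e3 : Nf cs u⁻¹ (cs.simple i) = Nf cs u (u * cs.simple i * u⁻¹) := Nf_inv cs _ _
  have e4 : Nf cs (cs.simple i) (cs.simple i) = 1 := by rw [Nf_simple, if_pos rfl]
  nth_rewrite 1 [e0]
  rw [e1, earg1, e2, earg2, e3, e4]
  exact zmod_aab _

lemma Nf_eq_one_iff {w t : W} (ht : cs.IsReflection t) :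
    Nf cs w t = 1 ↔ cs.length (t * w) < cs.length w := by
  constructor
  · intro h; exact (isLeftInversion_of_Nf_eq_one cs h).2
  · intro h
    have htt : t * (t * w) = w := by rw [← mul_assoc, ht.mul_self, one_mul]
    have h2 : Nf cs (t * (t * w)) t
        = Nf cs t t + Nf cs (t * w) (t⁻¹ * t * t) := Nf_mul cs _ _ _
    have earg : t⁻¹ * t * t = t := by group
    rw [htt, earg, Nf_self_refl cs ht] at h2
    have hz : Nf cs (t * w) t = 0 := by
      have h01 : ∀ x : ZMod 2, x ≠ 1 → x = 0 := by decide
      apply h01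
      intro hc
      have := (isLeftInversion_of_Nf_eq_one cs hc).2
      rw [htt] at this
      omega
    rw [h2, hz, add_zero]

lemma mem_iff_inv (w t : W) : cs.IsLeftInversion w t ↔ Nf cs w t = 1 :=
  ⟨fun h => (Nf_eq_one_iff cs h.1).2 h.2, fun h => isLeftInversion_of_Nf_eq_one cs h⟩

lemma exists_finset (w : W) :
    ∃ F : Finset W, (∀ t, t ∈ F ↔ Nf cs w t = 1) ∧ F.card = cs.length w := by
  obtain ⟨ω, hred, hw⟩ := cs.exists_reduced_word' w
  have hnd : (cs.leftInvSeq ω).Nodup := hred.nodup_leftInvSeq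
  refine ⟨(cs.leftInvSeq ω).toFinset, ?_, ?_⟩
  · intro t
    rw [List.mem_toFinset, hw, Nf_eq_count]
    constructor
    · intro hm; rw [List.count_eq_one_of_mem hnd hm]; rfl
    · intro h1
      by_contra hnm
      rw [List.count_eq_zero_of_not_mem hnm] at h1
      simp at h1
  · rw [List.toFinset_card_of_nodup hnd, cs.length_leftInvSeq, hw]
    exact hred.symm

lemma key_count (x y : W) :
    2 * (({t : W | cs.IsLeftInversion x t}
        ∩ {t : W | cs.IsLeftInversion y (x⁻¹ * t * x)}).ncard : ℤ)
      = (cs.length x : ℤ) + (cs.length y : ℤ) - (cs.length (x * y) : ℤ) := by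
  obtain ⟨Fx, hFx, hcx⟩ := exists_finset cs x
  obtain ⟨Fy, hFy, hcy⟩ := exists_finset cs y
  obtain ⟨Fxy, hFxy, hcxy⟩ := exists_finset cs (x * y)
  have hinj : Function.Injective (fun t : W => x * t * x⁻¹) := by
    intro s t h
    have e : ∀ z : W, x⁻¹ * (x * z * x⁻¹) * x = z := fun z => by group
    have h2 := congrArg (fun z => x⁻¹ * z * x) h
    simp only at h2
    rw [e, e] at h2
    exact h2
  set Fy' := Fy.image (fun t => x * t * x⁻¹) with hFy'def
  have hmemy' : ∀ t, t ∈ Fy' ↔ Nf cs y (x⁻¹ * t * x) = 1 := by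
    intro t
    rw [hFy'def, Finset.mem_image]
    constructor
    · rintro ⟨u, hu, rfl⟩
      have e : x⁻¹ * (x * u * x⁻¹) * x = u := by group
      rw [e]
      exact (hFy u).1 hu
    · intro h
      exact ⟨x⁻¹ * t * x, (hFy _).2 h, by group⟩
  have hsd : Fxy = symmDiff Fx Fy' := by
    ext t
    rw [hFxy, Finset.mem_symmDiff, Nf_mul]
    have hx := hFx t
    have hy := hmemy' t
    rw [hx, hy]
    have : ∀ A C : ZMod 2, A + C = 1 ↔ (A = 1 ∧ ¬C = 1) ∨ (C = 1 ∧ ¬A = 1) := by decide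
    exact this _ _
  have hset1 : {t : W | cs.IsLeftInversion x t} = ↑Fx := by
    ext t
    simp only [Set.mem_setOf_eq, Finset.coe_insert, Finset.mem_coe]
    rw [mem_iff_inv, hFx]
  have hset2 : {t : W | cs.IsLeftInversion y (x⁻¹ * t * x)} = ↑Fy' := by
    ext t
    simp only [Set.mem_setOf_eq, Finset.mem_coe]
    rw [mem_iff_inv, hmemy']
  rw [hset1, hset2, ← Finset.coe_inter, Set.ncard_coe_finset]
  have h1 : (Fx ∩ Fy').card + (Fx \ Fy').card = Fx.card :=
    Finset.card_inter_add_card_sdiff Fx Fy'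
  have h2 : (Fy' ∩ Fx).card + (Fy' \ Fx).card = Fy'.card :=
    Finset.card_inter_add_card_sdiff Fy' Fx
  have h2' : Fy' ∩ Fx = Fx ∩ Fy' := Finset.inter_comm _ _
  have h3 : (symmDiff Fx Fy').card = (Fx \ Fy').card + (Fy' \ Fx).card := by
    rw [symmDiff_def]
    exact Finset.card_union_of_disjoint (disjoint_sdiff_sdiff)
  have hcy' : Fy'.card = cs.length y := by
    rw [hFy'def, Finset.card_image_of_injective _ hinj, hcy]
  have hxy : cs.length (x * y) = (Fx \ Fy').card + (Fy' \ Fx).card := by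
    rw [← h3, ← hsd, hcxy]
  rw [h2'] at h2
  omega

end Cox

end EpsAux

/-- `ε₂^W(x,y) = ½(|x| + |y| - |xy|)`.  In particular `|x| + |y| - |xy|` is always
even, `ε₂^W` is a `ℤ`-valued `2`-cocycle, and `ε₂^W(x,y) = 0` exactly when
`|xy| = |x| + |y|`. -/
theorem eps_two_formula (cs : CoxeterSystem M W) :
    (∀ x y : W, 2 * epsTwo cs x y =
      (cs.length x : ℤ) + (cs.length y : ℤ) - (cs.length (x * y) : ℤ)) ∧
    (∀ x y : W, Even ((cs.length x : ℤ) + (cs.length y : ℤ) - (cs.length (x * y) : ℤ))) ∧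
    IsCocycle 2 (fun x : Fin 2 → W => epsTwo cs (x 0) (x 1)) ∧
    (∀ x y : W, epsTwo cs x y = 0 ↔
      cs.length (x * y) = cs.length x + cs.length y) := by
  have hmain : ∀ x y : W, 2 * epsTwo cs x y
      = (cs.length x : ℤ) + (cs.length y : ℤ) - (cs.length (x * y) : ℤ) :=
    fun x y => EpsAux.key_count cs x y
  refine ⟨hmain, ?_, ?_, ?_⟩
  · intro x y
    exact ⟨epsTwo cs x y, by rw [← hmain]; ring⟩
  · intro x
    have e00 : contract x (0 : Fin 2) (0 : Fin 2) = x 0 * x 1 := rfl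
    have e01 : contract x (0 : Fin 2) (1 : Fin 2) = x 2 := rfl
    have e10 : contract x (1 : Fin 2) (0 : Fin 2) = x 0 := rfl
    have e11 : contract x (1 : Fin 2) (1 : Fin 2) = x 1 * x 2 := rfl
    have es0 : (x ∘ Fin.succ) 0 = x 1 := rfl
    have es1 : (x ∘ Fin.succ) 1 = x 2 := rfl
    have ec0 : (x ∘ Fin.castSucc) 0 = x 0 := rfl
    have ec1 : (x ∘ Fin.castSucc) 1 = x 1 := rfl
    rw [Fin.sum_univ_two]
    simp only [e00, e01, e10, e11, es0, es1, ec0, ec1, Fin.val_zero, Fin.val_one,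
      zero_add, pow_one, smul_eq_mul]
    have h1 := hmain (x 1) (x 2)
    have h2 := hmain (x 0 * x 1) (x 2)
    have h3 := hmain (x 0) (x 1 * x 2)
    have h4 := hmain (x 0) (x 1)
    have hassoc : x 0 * x 1 * x 2 = x 0 * (x 1 * x 2) := mul_assoc _ _ _
    rw [hassoc] at h2
    norm_num
    linarith [h1, h2, h3, h4]
  · intro x y
    have h := hmain x y
    constructor
    · intro h0
      rw [h0, mul_zero] at h
      omega
    · intro hl
      rw [hl] at h
      push_cast at h
      omega
end

section
/- For any $x_1, \ldots, x_n \in W$, $\epsilon_n^W(x_1,\ldots,x_n) = \epsilon_n^W(x_n^{-1},\ldots,x_1^{-1})$. -/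
open CoxeterSystem

variable {B W : Type*} [Group W] {M : CoxeterMatrix B}

section Aux

variable {A : Type*} [AddCommGroup A]

private lemma negOnePow_congr {a b : ℕ} (h : a % 2 = b % 2) :
    ((-1 : ℤ)) ^ a = (-1 : ℤ) ^ b := by
  rcases Nat.even_or_odd a with ha | ha
  · have hb : Even b := by rw [Nat.even_iff] at *; omega
    rw [ha.neg_one_pow, hb.neg_one_pow]
  · have hb : Odd b := by rw [Nat.odd_iff] at *; omega
    rw [ha.neg_one_pow, hb.neg_one_pow]

private lemma negOnePow_smul_eq_zero {m : ℕ} {a : A} (h : ((-1 : ℤ) ^ m) • a = 0) :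
    a = 0 := by
  rcases Nat.even_or_odd m with hm | hm
  · rwa [hm.neg_one_pow, one_smul] at h
  · rwa [hm.neg_one_pow, neg_one_smul, neg_eq_zero] at h

private lemma contract_lt {n : ℕ} (x : Fin (n + 1) → W) (j i : Fin n) (h : (i : ℕ) < (j : ℕ)) :
    contract x j i = x i.castSucc := by
  rw [contract, if_pos h]

private lemma contract_eq {n : ℕ} (x : Fin (n + 1) → W) (j i : Fin n) (h : i = j) :
    contract x j i = x i.castSucc * x i.succ := by
  subst h
  rw [contract, if_neg (lt_irrefl _), if_pos rfl]

private lemma contract_gt {n : ℕ} (x : Fin (n + 1) → W) (j i : Fin n) (h : (j : ℕ) < (i : ℕ)) :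
    contract x j i = x i.succ := by
  rw [contract, if_neg (by omega), if_neg (by intro he; rw [he] at h; omega)]

private lemma cocycle_key {n : ℕ} {η : (Fin n → W) → A} (hcoc : IsCocycle n η)
    (Y : Fin (n + 1) → W) (j0 : Fin n)
    (h3 : ∀ j : Fin n, j ≠ j0 → η (contract Y j) = 0) :
    η (Y ∘ Fin.succ) + ((-1 : ℤ) ^ ((j0 : ℕ) + 1)) • η (contract Y j0)
      + ((-1 : ℤ) ^ (n + 1)) • η (Y ∘ Fin.castSucc) = 0 := by
  have h := hcoc Y
  rwa [Finset.sum_eq_single j0 (fun j _ hj => by rw [h3 j hj, smul_zero])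
    (fun hj => absurd (Finset.mem_univ j0) hj)] at h

private lemma cocycle_key₀ {n : ℕ} {η : (Fin n → W) → A} (hcoc : IsCocycle n η)
    (Y : Fin (n + 1) → W) (j0 : Fin n)
    (h1 : η (Y ∘ Fin.succ) = 0) (h2 : η (Y ∘ Fin.castSucc) = 0)
    (h3 : ∀ j : Fin n, j ≠ j0 → η (contract Y j) = 0) :
    η (contract Y j0) = 0 := by
  have h := cocycle_key hcoc Y j0 h3
  rw [h1, h2, smul_zero, zero_add, add_zero] at h
  exact negOnePow_smul_eq_zero h

private lemma rev_succ_eq {n : ℕ} (k : Fin n) : (k.rev).succ = (k.castSucc).rev := by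
  have hk := k.isLt
  ext
  simp only [Fin.val_succ, Fin.val_rev, Fin.coe_castSucc]
  omega

private lemma rev_castSucc_eq {n : ℕ} (k : Fin n) : (k.rev).castSucc = (k.succ).rev := by
  have hk := k.isLt
  ext
  simp only [Fin.val_succ, Fin.val_rev, Fin.coe_castSucc]
  omega

private lemma revinv_isCocycle {n : ℕ} {ζ : (Fin n → W) → A} (h : IsCocycle n ζ) :
    IsCocycle n (fun x => ζ fun k => (x k.rev)⁻¹) := by
  intro x
  have e1 : (fun k : Fin n => (((x ∘ Fin.succ)) k.rev)⁻¹)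
      = (fun k => (x k.rev)⁻¹) ∘ Fin.castSucc := by
    funext k
    simp only [Function.comp_apply]
    rw [rev_succ_eq]
  have e2 : (fun k : Fin n => (((x ∘ Fin.castSucc)) k.rev)⁻¹)
      = (fun k => (x k.rev)⁻¹) ∘ Fin.succ := by
    funext k
    simp only [Function.comp_apply]
    rw [rev_castSucc_eq]
  have e3 : ∀ j : Fin n, (fun i : Fin n => ((contract x j) i.rev)⁻¹)
      = contract (fun k => (x k.rev)⁻¹) j.rev := by
    intro j
    funext i
    have hi := i.isLt
    have hj := j.isLt
    rcases lt_trichotomy (i : ℕ) ((j.rev : ℕ)) with hlt | heq | hgt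
    · rw [contract_lt _ j.rev i hlt,
        contract_gt x j i.rev (by simp only [Fin.val_rev] at hlt ⊢; omega)]
      show (x (i.rev).succ)⁻¹ = (x (i.castSucc).rev)⁻¹
      rw [rev_succ_eq]
    · have hij : i = j.rev := Fin.ext heq
      rw [contract_eq _ j.rev i hij, contract_eq x j i.rev (by rw [hij, Fin.rev_rev])]
      show (x (i.rev).castSucc * x (i.rev).succ)⁻¹
          = (x (i.castSucc).rev)⁻¹ * (x (i.succ).rev)⁻¹
      rw [mul_inv_rev, rev_succ_eq, rev_castSucc_eq]
    · rw [contract_gt _ j.rev i hgt,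
        contract_lt x j i.rev (by simp only [Fin.val_rev] at hgt ⊢; omega)]
      show (x (i.rev).castSucc)⁻¹ = (x (i.succ).rev)⁻¹
      rw [rev_castSucc_eq]
  show ζ (fun k : Fin n => ((x ∘ Fin.succ) k.rev)⁻¹)
      + (∑ j : Fin n, ((-1 : ℤ) ^ ((j : ℕ) + 1)) • ζ (fun i : Fin n => ((contract x j) i.rev)⁻¹))
      + ((-1 : ℤ) ^ (n + 1)) • ζ (fun k : Fin n => ((x ∘ Fin.castSucc) k.rev)⁻¹) = 0
  rw [e1, e2]
  have esum : (∑ j : Fin n, ((-1 : ℤ) ^ ((j : ℕ) + 1)) • ζ (fun i : Fin n => ((contract x j) i.rev)⁻¹))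
      = ∑ j : Fin n, ((-1 : ℤ) ^ ((j : ℕ) + 1)) • ζ (contract (fun k => (x k.rev)⁻¹) j.rev) :=
    Finset.sum_congr rfl fun j _ => by rw [e3 j]
  rw [esum]
  have reindex : (∑ j : Fin n, ((-1 : ℤ) ^ ((j : ℕ) + 1)) • ζ (contract (fun k => (x k.rev)⁻¹) j.rev))
      = ∑ j : Fin n, ((-1 : ℤ) ^ (((j.rev : Fin n) : ℕ) + 1)) • ζ (contract (fun k => (x k.rev)⁻¹) j) := by
    apply Fintype.sum_equiv Fin.revPerm
    intro j
    simp only [Fin.revPerm_apply, Fin.rev_rev]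
  rw [reindex]
  have esum2 : (∑ j : Fin n, ((-1 : ℤ) ^ (((j.rev : Fin n) : ℕ) + 1)) • ζ (contract (fun k => (x k.rev)⁻¹) j))
      = ((-1 : ℤ) ^ (n + 1)) • ∑ j : Fin n, ((-1 : ℤ) ^ ((j : ℕ) + 1)) • ζ (contract (fun k => (x k.rev)⁻¹) j) := by
    rw [Finset.smul_sum]
    refine Finset.sum_congr rfl fun j _ => ?_
    rw [smul_smul, ← pow_add]
    congr 1
    apply negOnePow_congr
    have hj := j.isLt
    simp only [Fin.val_rev]
    omega
  rw [esum2]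
  have hz := h (fun k => (x k.rev)⁻¹)
  have hsq : ((-1 : ℤ) ^ (n + 1)) * ((-1 : ℤ) ^ (n + 1)) = 1 := by
    rw [← pow_add, negOnePow_congr (a := n + 1 + (n + 1)) (b := 0) (by omega), pow_zero]
  have h2 : ((-1 : ℤ) ^ (n + 1)) • (ζ ((fun k => (x k.rev)⁻¹) ∘ Fin.succ)
      + (∑ j : Fin n, ((-1 : ℤ) ^ ((j : ℕ) + 1)) • ζ (contract (fun k => (x k.rev)⁻¹) j))
      + ((-1 : ℤ) ^ (n + 1)) • ζ ((fun k => (x k.rev)⁻¹) ∘ Fin.castSucc)) = 0 := by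
    rw [hz, smul_zero]
  rw [smul_add, smul_add, smul_smul, hsq, one_smul] at h2
  rw [← h2]
  abel

private lemma revinv_collapsing (cs : CoxeterSystem M W) {n : ℕ} {ζ : (Fin n → W) → A}
    (h : Collapsing cs n ζ) : Collapsing cs n (fun x => ζ fun k => (x k.rev)⁻¹) := by
  intro x i hi hadd
  have hi2 : (i : ℕ) + 1 < n := hi
  have hin := i.isLt
  refine h (fun k => (x k.rev)⁻¹) ⟨n - 2 - (i : ℕ), by omega⟩
    (show n - 2 - (i : ℕ) + 1 < n by omega) ?_
  have r1 : ∀ hp : n - 2 - (i : ℕ) < n, (Fin.rev ⟨n - 2 - (i : ℕ), hp⟩) = (⟨(i : ℕ) + 1, hi⟩ : Fin n) := by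
    intro hp; ext; simp only [Fin.val_rev]; omega
  have r2 : ∀ hp : n - 2 - (i : ℕ) + 1 < n, (Fin.rev ⟨n - 2 - (i : ℕ) + 1, hp⟩) = i := by
    intro hp; ext; simp only [Fin.val_rev]; omega
  show cs.length ((x (Fin.rev ⟨n - 2 - (i : ℕ), by omega⟩))⁻¹ * (x (Fin.rev ⟨n - 2 - (i : ℕ) + 1, by omega⟩))⁻¹)
      = cs.length ((x (Fin.rev ⟨n - 2 - (i : ℕ), by omega⟩))⁻¹)
        + cs.length ((x (Fin.rev ⟨n - 2 - (i : ℕ) + 1, by omega⟩))⁻¹)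
  rw [r1, r2, ← mul_inv_rev, cs.length_inv, cs.length_inv, cs.length_inv, hadd, Nat.add_comm]

private lemma sub_isCocycle {n : ℕ} {ζ ξ : (Fin n → W) → A}
    (hζ : IsCocycle n ζ) (hξ : IsCocycle n ξ) : IsCocycle n (fun x => ζ x - ξ x) := by
  intro x
  have h1 := hζ x
  have h2 := hξ x
  show (ζ (x ∘ Fin.succ) - ξ (x ∘ Fin.succ))
      + (∑ j : Fin n, ((-1 : ℤ) ^ ((j : ℕ) + 1)) • (ζ (contract x j) - ξ (contract x j)))
      + ((-1 : ℤ) ^ (n + 1)) • (ζ (x ∘ Fin.castSucc) - ξ (x ∘ Fin.castSucc)) = 0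
  have e : (ζ (x ∘ Fin.succ) - ξ (x ∘ Fin.succ))
      + (∑ j : Fin n, ((-1 : ℤ) ^ ((j : ℕ) + 1)) • (ζ (contract x j) - ξ (contract x j)))
      + ((-1 : ℤ) ^ (n + 1)) • (ζ (x ∘ Fin.castSucc) - ξ (x ∘ Fin.castSucc))
      = (ζ (x ∘ Fin.succ)
          + (∑ j : Fin n, ((-1 : ℤ) ^ ((j : ℕ) + 1)) • ζ (contract x j))
          + ((-1 : ℤ) ^ (n + 1)) • ζ (x ∘ Fin.castSucc))
        - (ξ (x ∘ Fin.succ)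
          + (∑ j : Fin n, ((-1 : ℤ) ^ ((j : ℕ) + 1)) • ξ (contract x j))
          + ((-1 : ℤ) ^ (n + 1)) • ξ (x ∘ Fin.castSucc)) := by
    simp only [smul_sub, Finset.sum_sub_distrib]
    abel
  rw [e, h1, h2, sub_zero]

/-- Uniqueness: a collapsing cocycle vanishing on all constant simple tuples is zero. -/
private lemma eps_sub_zero (cs : CoxeterSystem M W) {n : ℕ} (hn : 1 ≤ n)
    {η : (Fin n → W) → A} (hcoc : IsCocycle n η) (hcol : Collapsing cs n η)
    (hval : ∀ i : B, η (fun _ => cs.simple i) = 0) : ∀ x : Fin n → W, η x = 0 := by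
  rcases eq_or_lt_of_le hn with h1 | h2
  · -- case n = 1
    subst h1
    intro x
    have hg : ∀ g : Fin 1 → W, η g = η (fun _ => g 0) :=
      fun g => congrArg η (funext fun i => by rw [Subsingleton.elim i 0])
    have hom : ∀ a b : W, η (fun _ => a * b) = η (fun _ => a) + η (fun _ => b) := by
      intro a b
      have h := hcoc ![a, b]
      rw [Fin.sum_univ_one] at h
      have c1 : (![a, b] ∘ Fin.succ) = (fun _ : Fin 1 => b) := by
        funext i; rw [Subsingleton.elim i 0]; rfl
      have c2 : contract ![a, b] 0 = (fun _ : Fin 1 => a * b) := by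
        funext i
        rw [Subsingleton.elim i 0, contract_eq ![a, b] 0 0 rfl]
        rfl
      have c3 : (![a, b] ∘ Fin.castSucc) = (fun _ : Fin 1 => a) := by
        funext i; rw [Subsingleton.elim i 0]; rfl
      rw [c1, c2, c3] at h
      norm_num at h
      rw [← sub_eq_zero]
      rw [show η (fun _ : Fin 1 => a * b) - (η (fun _ : Fin 1 => a) + η (fun _ : Fin 1 => b))
          = -(η (fun _ : Fin 1 => b) + -η (fun _ : Fin 1 => a * b) + η (fun _ : Fin 1 => a))
        from by abel, h, neg_zero]
    have hone : η (fun _ : Fin 1 => (1 : W)) = 0 := by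
      have h := hom 1 1
      rw [one_mul] at h
      nth_rewrite 1 [← add_zero (η (fun _ : Fin 1 => (1 : W)))] at h
      exact (add_left_cancel h).symm
    have hall : ∀ w : W, η (fun _ : Fin 1 => w) = 0 := by
      intro w
      induction w using cs.simple_induction_left with
      | one => exact hone
      | mul_simple_left w i hw => rw [hom, hval i, hw, add_zero]
    rw [hg x]
    exact hall (x 0)
  · -- case n ≥ 2
    have hn2 : 2 ≤ n := h2
    have L1 : ∀ (x : Fin n → W) (i : Fin n), x i = 1 → η x = 0 := by
      intro x i hx
      by_cases hi : (i : ℕ) + 1 < n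
      · apply hcol x i hi
        rw [hx, one_mul, cs.length_one, Nat.zero_add]
      · have hin := i.isLt
        have h2' : n - 2 + 1 < n := by omega
        apply hcol x ⟨n - 2, by omega⟩ h2'
        have e : (⟨n - 2 + 1, h2'⟩ : Fin n) = i := by ext; simp only; omega
        have hx' : x ⟨n - 2 + 1, h2'⟩ = 1 := by rw [e]; exact hx
        show cs.length (x ⟨n - 2, by omega⟩ * x ⟨n - 2 + 1, h2'⟩)
            = cs.length (x ⟨n - 2, by omega⟩) + cs.length (x ⟨n - 2 + 1, h2'⟩)
        rw [hx', mul_one, cs.length_one]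
        omega
    have hcolN : ∀ (x : Fin n → W) (a : ℕ) (h : a + 1 < n),
        cs.length (x ⟨a, by omega⟩ * x ⟨a + 1, h⟩)
          = cs.length (x ⟨a, by omega⟩) + cs.length (x ⟨a + 1, h⟩) → η x = 0 := by
      intro x a h hl
      exact hcol x ⟨a, by omega⟩ h hl
    -- C(k): if the first k entries are a common simple reflection, η vanishes
    have Ck : ∀ d k, 1 ≤ k → k + d = n → ∀ (s0 : B) (z : Fin n → W),
        (∀ i : Fin n, (i : ℕ) < k → z i = cs.simple s0) → η z = 0 := by
      intro d
      induction d with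
      | zero =>
        intro k _ hkn s0 z hz
        have hzc : z = fun _ => cs.simple s0 := funext fun i => hz i (by have := i.isLt; omega)
        rw [hzc]
        exact hval s0
      | succ d ih =>
        intro k hk1 hkn s0 z hz
        have hkn' : k < n := by omega
        rcases cs.length_simple_mul (z ⟨k, hkn'⟩) s0 with hA | hB
        · -- length adds: collapsing at (k-1, k)
          apply hcolN z (k - 1) (by omega)
          have e : (⟨k - 1 + 1, by omega⟩ : Fin n) = ⟨k, hkn'⟩ := by ext; simp only; omega
          rw [hz ⟨k - 1, by omega⟩ (by simp only [] <;> omega), e, cs.length_simple, hA, Nat.add_comm]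
        · -- descent: y = s * v with lengths adding
          obtain ⟨v, hv⟩ : ∃ v, v = cs.simple s0 * z ⟨k, hkn'⟩ := ⟨_, rfl⟩
          have hsv : cs.simple s0 * v = z ⟨k, hkn'⟩ := by
            rw [hv]; exact cs.simple_mul_simple_cancel_left s0
          have hBv : cs.length v + 1 = cs.length (z ⟨k, hkn'⟩) := by rw [hv]; exact hB
          have hadd : cs.length (cs.simple s0 * v)
              = cs.length (cs.simple s0) + cs.length v := by
            rw [hsv, cs.length_simple]; omega
          obtain ⟨Y, hY⟩ : ∃ Y : Fin (n + 1) → W, Y = fun (m : Fin (n + 1)) =>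
              if (m : ℕ) ≤ k then cs.simple s0
              else if (m : ℕ) = k + 1 then v
              else z ⟨(m : ℕ) - 1, by have := m.isLt; omega⟩ := ⟨_, rfl⟩
          have Yle : ∀ m : Fin (n + 1), (m : ℕ) ≤ k → Y m = cs.simple s0 := by
            intro m hm; rw [hY]; simp only; rw [if_pos hm]
          have Yeq : ∀ m : Fin (n + 1), (m : ℕ) = k + 1 → Y m = v := by
            intro m hm; rw [hY]; simp only; rw [if_neg (by omega), if_pos hm]
          have Ygt : ∀ m : Fin (n + 1), k + 1 < (m : ℕ) →
              Y m = z ⟨(m : ℕ) - 1, by have := m.isLt; omega⟩ := by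
            intro m hm; rw [hY]; simp only; rw [if_neg (by omega), if_neg (by omega)]
          have hcontract : ∀ j : Fin n, (j : ℕ) ≠ k → η (contract Y j) = 0 := by
            intro j hjk
            have hjn := j.isLt
            rcases lt_or_gt_of_ne hjk with hj | hj
            · -- j < k: entry 1 appears
              apply L1 (contract Y j) j
              rw [contract_eq Y j j rfl,
                Yle j.castSucc (by simp only [Fin.coe_castSucc] <;> omega),
                Yle j.succ (by simp only [Fin.val_succ] <;> omega),
                cs.simple_mul_simple_self]
            · by_cases hj2 : (j : ℕ) = k + 1
              · -- use induction hypothesis with k+1 leading simples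
                apply ih (k + 1) (by omega) (by omega) s0 (contract Y j)
                intro i hi
                rw [contract_lt Y j i (by omega)]
                exact Yle i.castSucc (by simp only [Fin.coe_castSucc] <;> omega)
              · -- j ≥ k+2: s and v stay adjacent
                apply hcolN (contract Y j) k (by omega)
                rw [contract_lt Y j ⟨k, by omega⟩ (by simp only [] <;> omega),
                  contract_lt Y j ⟨k + 1, by omega⟩ (by simp only [] <;> omega),
                  Yle _ (by simp only [Fin.coe_castSucc] <;> omega),
                  Yeq _ (by simp only [Fin.coe_castSucc] <;> omega)]
                exact hadd
          have h1 : η (Y ∘ Fin.succ) = 0 := by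
            apply hcolN (Y ∘ Fin.succ) (k - 1) (by omega)
            simp only [Function.comp_apply]
            rw [Yle _ (by simp only [Fin.val_succ] <;> omega),
              Yeq _ (by simp only [Fin.val_succ] <;> omega)]
            exact hadd
          have h2c : η (Y ∘ Fin.castSucc) = 0 := by
            by_cases hk2 : k + 1 < n
            · apply hcolN (Y ∘ Fin.castSucc) k hk2
              simp only [Function.comp_apply]
              rw [Yle _ (by simp only [Fin.coe_castSucc] <;> omega),
                Yeq _ (by simp only [Fin.coe_castSucc] <;> omega)]
              exact hadd
            · have : (Y ∘ Fin.castSucc) = fun _ => cs.simple s0 :=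
                funext fun i =>
                  Yle i.castSucc (by have := i.isLt; simp only [Fin.coe_castSucc] <;> omega)
              rw [this]
              exact hval s0
          have hzeq : contract Y ⟨k, hkn'⟩ = z := by
            funext i
            have hin := i.isLt
            rcases lt_trichotomy (i : ℕ) k with hik | hik | hik
            · rw [contract_lt Y _ i hik,
                Yle i.castSucc (by simp only [Fin.coe_castSucc] <;> omega)]
              exact (hz i hik).symm
            · have hij : i = ⟨k, hkn'⟩ := Fin.ext hik
              rw [contract_eq Y _ i hij,
                Yle i.castSucc (by simp only [Fin.coe_castSucc] <;> omega),
                Yeq i.succ (by simp only [Fin.val_succ] <;> omega), hsv, hij]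
            · rw [contract_gt Y _ i hik,
                Ygt i.succ (by simp only [Fin.val_succ] <;> omega)]
              exact congrArg z (Fin.ext (by simp only [Fin.val_succ] <;> omega))
          have := cocycle_key₀ hcoc Y ⟨k, hkn'⟩ h1 h2c
            (fun j hj => hcontract j (fun h => hj (Fin.ext h)))
          rwa [hzeq] at this
    -- main induction on the length of the first entry
    have main : ∀ m, ∀ x : Fin n → W, cs.length (x ⟨0, by omega⟩) ≤ m → η x = 0 := by
      intro m
      induction m with
      | zero =>
        intro x hx
        exact L1 x ⟨0, by omega⟩ (cs.length_eq_zero_iff.mp (Nat.le_zero.mp hx))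
      | succ m ih =>
        intro x hx
        by_cases hx1 : x ⟨0, by omega⟩ = 1
        · exact L1 x ⟨0, by omega⟩ hx1
        · obtain ⟨s0, hs0⟩ := cs.exists_leftDescent_of_ne_one hx1
          have hB : cs.length (cs.simple s0 * x ⟨0, by omega⟩) + 1
              = cs.length (x ⟨0, by omega⟩) := (cs.isLeftDescent_iff).mp hs0
          obtain ⟨w, hw⟩ : ∃ w, w = cs.simple s0 * x ⟨0, by omega⟩ := ⟨_, rfl⟩
          have hsw : cs.simple s0 * w = x ⟨0, by omega⟩ := by
            rw [hw]; exact cs.simple_mul_simple_cancel_left s0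
          have hBw : cs.length w + 1 = cs.length (x ⟨0, by omega⟩) := by rw [hw]; exact hB
          have hadd : cs.length (cs.simple s0 * w)
              = cs.length (cs.simple s0) + cs.length w := by
            rw [hsw, cs.length_simple]; omega
          obtain ⟨Y, hY⟩ : ∃ Y : Fin (n + 1) → W, Y = fun (m' : Fin (n + 1)) =>
              if (m' : ℕ) = 0 then cs.simple s0
              else if (m' : ℕ) = 1 then w
              else x ⟨(m' : ℕ) - 1, by have := m'.isLt; omega⟩ := ⟨_, rfl⟩
          have Y0 : ∀ m' : Fin (n + 1), (m' : ℕ) = 0 → Y m' = cs.simple s0 := by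
            intro m' hm; rw [hY]; simp only; rw [if_pos hm]
          have Y1 : ∀ m' : Fin (n + 1), (m' : ℕ) = 1 → Y m' = w := by
            intro m' hm; rw [hY]; simp only; rw [if_neg (by omega), if_pos hm]
          have Yg : ∀ m' : Fin (n + 1), 1 < (m' : ℕ) →
              Y m' = x ⟨(m' : ℕ) - 1, by have := m'.isLt; omega⟩ := by
            intro m' hm; rw [hY]; simp only; rw [if_neg (by omega), if_neg (by omega)]
          have h3 : ∀ j : Fin n, j ≠ (⟨0, by omega⟩ : Fin n) → η (contract Y j) = 0 := by
            intro j hj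
            have hj0 : 0 < (j : ℕ) := by
              rcases Nat.eq_zero_or_pos (j : ℕ) with h | h
              · exact absurd (Fin.ext h) hj
              · exact h
            have hjn := j.isLt
            by_cases hj1 : (j : ℕ) = 1
            · apply Ck (n - 1) 1 le_rfl (by omega) s0 (contract Y j)
              intro i hi
              rw [contract_lt Y j i (by omega)]
              exact Y0 i.castSucc (by simp only [Fin.coe_castSucc] <;> omega)
            · apply hcolN (contract Y j) 0 (by omega)
              rw [contract_lt Y j ⟨0, by omega⟩ (by simp only [] <;> omega),
                contract_lt Y j ⟨0 + 1, by omega⟩ (by simp only [] <;> omega),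
                Y0 _ (by simp only [Fin.coe_castSucc] <;> omega),
                Y1 _ (by simp only [Fin.coe_castSucc] <;> omega)]
              exact hadd
          have h2c : η (Y ∘ Fin.castSucc) = 0 := by
            apply hcolN (Y ∘ Fin.castSucc) 0 (by omega)
            simp only [Function.comp_apply]
            rw [Y0 _ (by simp only [Fin.coe_castSucc] <;> omega),
              Y1 _ (by simp only [Fin.coe_castSucc] <;> omega)]
            exact hadd
          have hxeq : contract Y ⟨0, by omega⟩ = x := by
            funext i
            have hin := i.isLt
            rcases Nat.eq_zero_or_pos (i : ℕ) with hi0 | hi0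
            · have hij : i = (⟨0, by omega⟩ : Fin n) := Fin.ext hi0
              rw [contract_eq Y _ i hij,
                Y0 i.castSucc (by simp only [Fin.coe_castSucc] <;> omega),
                Y1 i.succ (by simp only [Fin.val_succ] <;> omega), hsw, hij]
            · rw [contract_gt Y _ i hi0, Yg i.succ (by simp only [Fin.val_succ] <;> omega)]
              exact congrArg x (Fin.ext (by simp only [Fin.val_succ] <;> omega))
          have hsucc : η (Y ∘ Fin.succ) = 0 := by
            apply ih
            have e : (Y ∘ Fin.succ) ⟨0, by omega⟩ = w :=
              Y1 _ (by simp only [Fin.val_succ] <;> omega)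
            rw [e]
            omega
          have key := cocycle_key hcoc Y ⟨0, by omega⟩ h3
          rw [hxeq, h2c, smul_zero, add_zero, hsucc, zero_add] at key
          exact negOnePow_smul_eq_zero key
    intro x
    exact main (cs.length (x ⟨0, by omega⟩)) x le_rfl

private lemma eps_symm (cs : CoxeterSystem M W) {A : Type*} [AddCommGroup A] [One A]
    {n : ℕ} (hn : 1 ≤ n) (ζ : (Fin n → W) → A) (hζ : IsEps cs n ζ) (x : Fin n → W) :
    ζ x = ζ (fun k => (x k.rev)⁻¹) := by
  obtain ⟨hcoc, hcol, hval⟩ := hζ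
  have key : ∀ y : Fin n → W, ζ y - ζ (fun k => (y k.rev)⁻¹) = 0 := by
    refine eps_sub_zero cs hn (η := fun y => ζ y - ζ (fun k => (y k.rev)⁻¹)) ?_ ?_ ?_
    · exact sub_isCocycle hcoc (revinv_isCocycle hcoc)
    · intro y i hi hadd
      show ζ y - ζ (fun k => (y k.rev)⁻¹) = 0
      rw [hcol y i hi hadd,
        show ζ (fun k => (y k.rev)⁻¹) = 0 from revinv_collapsing cs hcol y i hi hadd, sub_self]
    · intro i
      show ζ (fun _ => cs.simple i) - ζ (fun k => (((fun _ : Fin n => cs.simple i)) k.rev)⁻¹) = 0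
      have e : (fun k : Fin n => (((fun _ : Fin n => cs.simple i)) k.rev)⁻¹)
          = fun _ : Fin n => cs.simple i := funext fun k => cs.inv_simple i
      rw [e, sub_self]
  exact sub_eq_zero.mp (key x)

end Aux

/-- `εₙ^W(x₁, …, xₙ) = εₙ^W(xₙ⁻¹, …, x₁⁻¹)`, where `εₙ^W` is the unique collapsing
`n`-cocycle (valued in `ℤ` for `n` even, `𝔽₂` for `n` odd, trivial action) with
`εₙ^W(s, …, s) = 1` for all simple reflections `s`. -/
theorem eps_reverse_inverse (cs : CoxeterSystem M W) (n : ℕ) (hn : 1 ≤ n) :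
    (Even n → ∀ ζ : (Fin n → W) → ℤ, IsEps cs n ζ →
      ∀ x : Fin n → W, ζ x = ζ (fun k => (x k.rev)⁻¹)) ∧
    (Odd n → ∀ ζ : (Fin n → W) → ZMod 2, IsEps cs n ζ →
      ∀ x : Fin n → W, ζ x = ζ (fun k => (x k.rev)⁻¹)) := by
  constructor
  · intro _ ζ hζ x
    exact eps_symm cs hn ζ hζ x
  · intro _ ζ hζ x
    exact eps_symm cs hn ζ hζ x
end

section
/- Let $(W', S') \subset (W, S)$ be a standard parabolic subgroup (i.e., $S' \subset S$ and $W'$ is the subgroup generated by $S'$). Then the restriction of $\epsilon_n^W$ to $(W')^n$ equals $\epsilon_n^{W'}$. -/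
open CoxeterSystem

variable {B W : Type*} [Group W] {M : CoxeterMatrix B}

namespace EpsPriv
section AuxEps

variable {A : Type*} [AddCommGroup A] {cs : CoxeterSystem M W}

/-! Entry computations for `contract`. -/

lemma contract_entry_lt {n : ℕ} (x : Fin (n + 1) → W) (j : Fin n) (c : ℕ)
    (hcn : c < n) (h : c < (j : ℕ)) (hc : c < n + 1) :
    contract x j ⟨c, hcn⟩ = x ⟨c, hc⟩ := by
  have hcs : (⟨c, hcn⟩ : Fin n).castSucc = ⟨c, hc⟩ := Fin.ext (by simp)
  simp only [contract]
  rw [if_pos (by simpa using h), hcs]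

lemma contract_entry_eq {n : ℕ} (x : Fin (n + 1) → W) (j : Fin n) (c : ℕ)
    (hcn : c < n) (h : c = (j : ℕ)) (hc : c < n + 1) (hc' : c + 1 < n + 1) :
    contract x j ⟨c, hcn⟩ = x ⟨c, hc⟩ * x ⟨c + 1, hc'⟩ := by
  have hcs : (⟨c, hcn⟩ : Fin n).castSucc = ⟨c, hc⟩ := Fin.ext (by simp)
  have hss : (⟨c, hcn⟩ : Fin n).succ = ⟨c + 1, hc'⟩ := Fin.ext (by simp)
  simp only [contract]
  rw [if_neg (by simp [h]), if_pos (Fin.ext (by simpa using h)), hcs, hss]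

lemma contract_entry_gt {n : ℕ} (x : Fin (n + 1) → W) (j : Fin n) (c : ℕ)
    (hcn : c < n) (h : (j : ℕ) < c) (hc' : c + 1 < n + 1) :
    contract x j ⟨c, hcn⟩ = x ⟨c + 1, hc'⟩ := by
  have hss : (⟨c, hcn⟩ : Fin n).succ = ⟨c + 1, hc'⟩ := Fin.ext (by simp)
  simp only [contract]
  rw [if_neg (by simp; omega), if_neg (by simp [Fin.ext_iff]; omega), hss]

/-! Vanishing lemmas from the collapsing property. -/

lemma vanish_pair {n : ℕ} {η : (Fin n → W) → A}
    (hcol : Collapsing cs n η) (t : Fin n → W) (i : ℕ) (h0 : i < n) (h1 : i + 1 < n)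
    (hadd : cs.length (t ⟨i, h0⟩ * t ⟨i + 1, h1⟩) =
      cs.length (t ⟨i, h0⟩) + cs.length (t ⟨i + 1, h1⟩)) : η t = 0 :=
  hcol t ⟨i, h0⟩ h1 hadd

lemma vanish_one {n : ℕ} {η : (Fin n → W) → A}
    (hcol : Collapsing cs n η) (t : Fin n → W) (i : ℕ) (h0 : i < n) (h1 : i + 1 < n)
    (ht : t ⟨i, h0⟩ = 1) : η t = 0 := by
  apply vanish_pair hcol t i h0 h1
  rw [ht, one_mul, cs.length_one, zero_add]

/-! Phase-1 relation: additive pair in positions (0, 1). -/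

lemma phase1 {n : ℕ} (hn : 2 ≤ n) {η : (Fin n → W) → A}
    (hc : IsCocycle n η) (hcol : Collapsing cs n η) (x : Fin (n + 1) → W)
    (ha0 : 0 < n + 1) (ha1 : 1 < n + 1)
    (hadd : cs.length (x ⟨0, ha0⟩ * x ⟨1, ha1⟩) =
      cs.length (x ⟨0, ha0⟩) + cs.length (x ⟨1, ha1⟩))
    (hb0 : 0 < n) (hb1 : 1 < n) :
    η (contract x ⟨0, hb0⟩) = η (x ∘ Fin.succ) + η (contract x ⟨1, hb1⟩) := by
  have h := hc x
  have hcast : η (x ∘ Fin.castSucc) = 0 := by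
    apply vanish_pair hcol _ 0 hb0 hb1
    simp only [Function.comp_apply, Fin.castSucc_mk]
    exact hadd
  have hzero : ∀ j ∈ Finset.univ, j ∉ ({⟨0, hb0⟩, ⟨1, hb1⟩} : Finset (Fin n)) →
      ((-1 : ℤ) ^ ((j : ℕ) + 1)) • η (contract x j) = 0 := by
    intro j _ hj
    simp only [Finset.mem_insert, Finset.mem_singleton, Fin.ext_iff] at hj
    push_neg at hj
    have hj2 : 2 ≤ (j : ℕ) := by omega
    have hv : η (contract x j) = 0 := by
      apply vanish_pair hcol _ 0 hb0 hb1
      rw [contract_entry_lt x j 0 hb0 (by omega) ha0,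
        contract_entry_lt x j 1 hb1 (by omega) ha1]
      exact hadd
    rw [hv, smul_zero]
  rw [← Finset.sum_subset
      (Finset.subset_univ ({⟨0, hb0⟩, ⟨1, hb1⟩} : Finset (Fin n))) hzero] at h
  rw [Finset.sum_pair (by simp [Fin.ext_iff] : (⟨0, hb0⟩ : Fin n) ≠ ⟨1, hb1⟩)] at h
  rw [hcast, smul_zero, add_zero] at h
  norm_num at h
  calc η (contract x ⟨0, hb0⟩)
      = η (contract x ⟨0, hb0⟩)
        + (η (x ∘ Fin.succ) + (-η (contract x ⟨0, hb0⟩) + η (contract x ⟨1, hb1⟩))) := by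
        rw [h, add_zero]
    _ = η (x ∘ Fin.succ) + η (contract x ⟨1, hb1⟩) := by abel

/-! Phase-2 relations: additive pair in positions (k+1, k+2), with
`x k * x (k+1) = 1`. -/

lemma phase2_mid {n : ℕ} {η : (Fin n → W) → A}
    (hc : IsCocycle n η) (hcol : Collapsing cs n η) (x : Fin (n + 1) → W)
    (k : ℕ) (hkn : k + 2 < n)
    (ha0 : k < n + 1) (ha1 : k + 1 < n + 1) (ha2 : k + 2 < n + 1)
    (hadd : cs.length (x ⟨k + 1, ha1⟩ * x ⟨k + 2, ha2⟩) =
      cs.length (x ⟨k + 1, ha1⟩) + cs.length (x ⟨k + 2, ha2⟩))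
    (hone : x ⟨k, ha0⟩ * x ⟨k + 1, ha1⟩ = 1)
    (hb0 : k < n) (hb1 : k + 1 < n) (hb2 : k + 2 < n) :
    η (contract x ⟨k + 1, hb1⟩) = η (contract x ⟨k + 2, hb2⟩) := by
  have h := hc x
  have hsucc : η (x ∘ Fin.succ) = 0 := by
    apply vanish_pair hcol _ k hb0 hb1
    simp only [Function.comp_apply, Fin.succ_mk]
    exact hadd
  have hcast : η (x ∘ Fin.castSucc) = 0 := by
    apply vanish_pair hcol _ (k + 1) hb1 hb2
    simp only [Function.comp_apply, Fin.castSucc_mk]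
    exact hadd
  have hzero : ∀ j ∈ Finset.univ,
      j ∉ ({⟨k + 1, hb1⟩, ⟨k + 2, hb2⟩} : Finset (Fin n)) →
      ((-1 : ℤ) ^ ((j : ℕ) + 1)) • η (contract x j) = 0 := by
    intro j _ hj
    simp only [Finset.mem_insert, Finset.mem_singleton, Fin.ext_iff] at hj
    push_neg at hj
    have hv : η (contract x j) = 0 := by
      rcases lt_trichotomy (j : ℕ) k with hlt | heq | hgt
      · apply vanish_pair hcol _ k hb0 hb1
        rw [contract_entry_gt x j k hb0 hlt ha1,
          contract_entry_gt x j (k + 1) hb1 (by omega) ha2]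
        exact hadd
      · apply vanish_one hcol _ k hb0 hb1
        rw [contract_entry_eq x j k hb0 heq.symm ha0 ha1]
        exact hone
      · have hj3 : k + 3 ≤ (j : ℕ) := by omega
        apply vanish_pair hcol _ (k + 1) hb1 hb2
        rw [contract_entry_lt x j (k + 1) hb1 (by omega) ha1,
          contract_entry_lt x j (k + 2) hb2 (by omega) ha2]
        exact hadd
    rw [hv, smul_zero]
  rw [← Finset.sum_subset
      (Finset.subset_univ ({⟨k + 1, hb1⟩, ⟨k + 2, hb2⟩} : Finset (Fin n))) hzero] at h
  rw [Finset.sum_pair (by simp [Fin.ext_iff] :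
      (⟨k + 1, hb1⟩ : Fin n) ≠ ⟨k + 2, hb2⟩)] at h
  rw [hsucc, hcast, smul_zero, add_zero, zero_add] at h
  simp only [Fin.val_mk] at h
  have hpow : ((-1 : ℤ) ^ (k + 2 + 1)) = -((-1 : ℤ) ^ (k + 1 + 1)) := by
    rw [pow_succ]; ring
  rw [hpow, neg_smul, ← sub_eq_add_neg, sub_eq_zero] at h
  rcases Nat.even_or_odd (k + 1 + 1) with he | ho
  · rwa [he.neg_one_pow, one_smul, one_smul] at h
  · refine neg_injective ?_
    rwa [ho.neg_one_pow, neg_one_smul ℤ, neg_one_smul ℤ] at h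

lemma phase2_last {n : ℕ} {η : (Fin n → W) → A}
    (hc : IsCocycle n η) (hcol : Collapsing cs n η) (x : Fin (n + 1) → W)
    (k : ℕ) (hkn : k + 2 = n)
    (ha0 : k < n + 1) (ha1 : k + 1 < n + 1) (ha2 : k + 2 < n + 1)
    (hadd : cs.length (x ⟨k + 1, ha1⟩ * x ⟨k + 2, ha2⟩) =
      cs.length (x ⟨k + 1, ha1⟩) + cs.length (x ⟨k + 2, ha2⟩))
    (hone : x ⟨k, ha0⟩ * x ⟨k + 1, ha1⟩ = 1)
    (hb0 : k < n) (hb1 : k + 1 < n)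
    (hlast : η (x ∘ Fin.castSucc) = 0) :
    η (contract x ⟨k + 1, hb1⟩) = 0 := by
  have h := hc x
  have hsucc : η (x ∘ Fin.succ) = 0 := by
    apply vanish_pair hcol _ k hb0 hb1
    simp only [Function.comp_apply, Fin.succ_mk]
    exact hadd
  have hzero : ∀ j ∈ Finset.univ,
      j ∉ ({⟨k + 1, hb1⟩} : Finset (Fin n)) →
      ((-1 : ℤ) ^ ((j : ℕ) + 1)) • η (contract x j) = 0 := by
    intro j _ hj
    simp only [Finset.mem_singleton, Fin.ext_iff] at hj
    have hjlt : (j : ℕ) < n := j.isLt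
    have hv : η (contract x j) = 0 := by
      rcases lt_trichotomy (j : ℕ) k with hlt | heq | hgt
      · apply vanish_pair hcol _ k hb0 hb1
        rw [contract_entry_gt x j k hb0 hlt ha1,
          contract_entry_gt x j (k + 1) hb1 (by omega) ha2]
        exact hadd
      · apply vanish_one hcol _ k hb0 hb1
        rw [contract_entry_eq x j k hb0 heq.symm ha0 ha1]
        exact hone
      · omega
    rw [hv, smul_zero]
  rw [← Finset.sum_subset
      (Finset.subset_univ ({⟨k + 1, hb1⟩} : Finset (Fin n))) hzero] at h
  rw [Finset.sum_singleton] at h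
  rw [hsucc, hlast, smul_zero, add_zero, zero_add] at h
  simp only [Fin.val_mk] at h
  rcases Nat.even_or_odd (k + 1 + 1) with he | ho
  · rwa [he.neg_one_pow, one_smul] at h
  · rwa [ho.neg_one_pow, neg_one_smul ℤ, neg_eq_zero] at h

end AuxEps

section Step2

variable {A : Type*} [AddCommGroup A] {cs : CoxeterSystem M W}

lemma step2key {n : ℕ} (hn : 2 ≤ n) (h0n : 0 < n) {η : (Fin n → W) → A}
    (hc : IsCocycle n η) (hcol : Collapsing cs n η)
    (hdiag : ∀ i : B, η (fun _ => cs.simple i) = 0) :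
    ∀ (d m₀ : ℕ) (y : Fin n → W), n - (m₀ + 2) ≤ d → m₀ + 1 < n →
      (∀ i : Fin n, (i : ℕ) < m₀ + 1 → y i = y ⟨0, h0n⟩) →
      cs.length (y ⟨0, h0n⟩) = 1 → η y = 0 := by
  intro d
  induction d using Nat.strong_induction_on with
  | _ d IH =>
  intro m₀ y hd hmn hpre hlen1
  obtain ⟨i₀, hs⟩ := cs.length_eq_one_iff.mp hlen1
  have hA : m₀ < n := Nat.lt_of_succ_lt hmn
  by_cases haddp : cs.length (y ⟨m₀, hA⟩ * y ⟨m₀ + 1, hmn⟩) =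
      cs.length (y ⟨m₀, hA⟩) + cs.length (y ⟨m₀ + 1, hmn⟩)
  · exact vanish_pair hcol y m₀ hA hmn haddp
  · have hym : y ⟨m₀, hA⟩ = cs.simple i₀ := by
      rw [hpre ⟨m₀, hA⟩ (by simp only [Fin.val_mk]; omega), hs]
    have hdown : cs.length (cs.simple i₀ * y ⟨m₀ + 1, hmn⟩) + 1
        = cs.length (y ⟨m₀ + 1, hmn⟩) := by
      rcases cs.length_simple_mul (y ⟨m₀ + 1, hmn⟩) i₀ with hup | hdn
      · exfalso
        apply haddp
        rw [hym, hup, cs.length_simple]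
        omega
      · exact hdn
    set xx : Fin (n + 1) → W := fun i =>
      if (i : ℕ) < m₀ + 2 then y ⟨0, h0n⟩
      else if (i : ℕ) = m₀ + 2 then cs.simple i₀ * y ⟨m₀ + 1, hmn⟩
      else y ⟨(i : ℕ) - 1, by have := i.isLt; omega⟩ with hxx
    have hxlow : ∀ (c : ℕ) (hcn : c < n + 1), c < m₀ + 2 →
        xx ⟨c, hcn⟩ = y ⟨0, h0n⟩ := by
      intro c hcn hcm
      rw [hxx]
      simp only [Fin.val_mk]
      rw [if_pos hcm]
    have hxmid : ∀ (c : ℕ) (hcn : c < n + 1), c = m₀ + 2 →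
        xx ⟨c, hcn⟩ = cs.simple i₀ * y ⟨m₀ + 1, hmn⟩ := by
      intro c hcn hcm
      rw [hxx]
      simp only [Fin.val_mk]
      rw [if_neg (by omega), if_pos hcm]
    have hxhigh : ∀ (c : ℕ) (hcn : c < n + 1) (hcn' : c - 1 < n), m₀ + 2 < c →
        xx ⟨c, hcn⟩ = y ⟨c - 1, hcn'⟩ := by
      intro c hcn hcn' hcm
      rw [hxx]
      simp only [Fin.val_mk]
      rw [if_neg (by omega), if_neg (by omega)]
    have pa0 : m₀ < n + 1 := Nat.lt_succ_of_lt hA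
    have pa1 : m₀ + 1 < n + 1 := Nat.lt_succ_of_lt hmn
    have pa2 : m₀ + 2 < n + 1 := Nat.succ_lt_succ hmn
    have hadd' : cs.length (xx ⟨m₀ + 1, pa1⟩ * xx ⟨m₀ + 2, pa2⟩) =
        cs.length (xx ⟨m₀ + 1, pa1⟩) + cs.length (xx ⟨m₀ + 2, pa2⟩) := by
      rw [hxlow (m₀ + 1) pa1 (by omega), hxmid (m₀ + 2) pa2 rfl, hs,
        cs.simple_mul_simple_cancel_left, cs.length_simple]
      omega
    have hone' : xx ⟨m₀, pa0⟩ * xx ⟨m₀ + 1, pa1⟩ = 1 := by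
      rw [hxlow m₀ pa0 (by omega), hxlow (m₀ + 1) pa1 (by omega), hs,
        cs.simple_mul_simple_self]
    have hcy : contract xx ⟨m₀ + 1, hmn⟩ = y := by
      funext i
      obtain ⟨iv, hiv⟩ := i
      rcases lt_trichotomy iv (m₀ + 1) with hlt | heq2 | hgt
      · rw [contract_entry_lt xx _ iv hiv (by simp only [Fin.val_mk]; omega)
          (Nat.lt_succ_of_lt hiv), hxlow iv _ (by omega)]
        exact (hpre ⟨iv, hiv⟩ (by simp only [Fin.val_mk]; omega)).symm
      · subst heq2
        rw [contract_entry_eq xx _ (m₀ + 1) hiv rfl pa1 pa2,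
          hxlow (m₀ + 1) pa1 (by omega), hxmid (m₀ + 1 + 1) pa2 rfl, hs,
          cs.simple_mul_simple_cancel_left]
      · rw [contract_entry_gt xx _ iv hiv (by simp only [Fin.val_mk]; omega)
          (Nat.succ_lt_succ hiv), hxhigh (iv + 1) (Nat.succ_lt_succ hiv) hiv (by omega)]
        exact rfl
    by_cases hmid : m₀ + 2 < n
    · have heq := phase2_mid hc hcol xx m₀ hmid pa0 pa1 pa2 hadd' hone' hA hmn hmid
      rw [hcy] at heq
      rw [heq]
      have hy'low : ∀ (iv : ℕ) (hiv : iv < n), iv < m₀ + 2 →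
          contract xx ⟨m₀ + 2, hmid⟩ ⟨iv, hiv⟩ = y ⟨0, h0n⟩ := by
        intro iv hiv hlt
        rw [contract_entry_lt xx _ iv hiv (by simp only [Fin.val_mk]; omega)
          (Nat.lt_succ_of_lt hiv), hxlow iv _ hlt]
      have hpre' : ∀ i : Fin n, (i : ℕ) < m₀ + 1 + 1 →
          contract xx ⟨m₀ + 2, hmid⟩ i = contract xx ⟨m₀ + 2, hmid⟩ ⟨0, h0n⟩ := by
        intro i hi
        obtain ⟨iv, hiv⟩ := i
        rw [hy'low iv hiv (by simp at hi; omega), hy'low 0 h0n (by omega)]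
      have hlen1' : cs.length (contract xx ⟨m₀ + 2, hmid⟩ ⟨0, h0n⟩) = 1 := by
        rw [hy'low 0 h0n (by omega)]
        exact hlen1
      exact IH (n - (m₀ + 3)) (by omega) (m₀ + 1) (contract xx ⟨m₀ + 2, hmid⟩)
        le_rfl hmid hpre' hlen1'
    · have hlastn : m₀ + 2 = n := by omega
      have hcast0 : η (xx ∘ Fin.castSucc) = 0 := by
        have hcc : (xx ∘ Fin.castSucc) = fun _ : Fin n => cs.simple i₀ := by
          funext i
          obtain ⟨iv, hiv⟩ := i
          simp only [Function.comp_apply, Fin.castSucc_mk]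
          rw [hxlow iv (Nat.lt_succ_of_lt hiv) (by omega), hs]
        rw [hcc]
        exact hdiag i₀
      have hz := phase2_last hc hcol xx m₀ hlastn pa0 pa1 pa2 hadd' hone' hA hmn hcast0
      rw [hcy] at hz
      exact hz

lemma step2 {n : ℕ} (hn : 2 ≤ n) (h0n : 0 < n) {η : (Fin n → W) → A}
    (hc : IsCocycle n η) (hcol : Collapsing cs n η)
    (hdiag : ∀ i : B, η (fun _ => cs.simple i) = 0)
    (y : Fin n → W) (hlen1 : cs.length (y ⟨0, h0n⟩) = 1) : η y = 0 := by
  apply step2key hn h0n hc hcol hdiag n 0 y (by omega) (by omega) _ hlen1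
  intro i hi
  have : i = ⟨0, h0n⟩ := Fin.ext (by simp only [Fin.val_mk]; omega)
  rw [this]

end Step2

section Step1

variable {A : Type*} [AddCommGroup A] {cs : CoxeterSystem M W}

lemma step1 {n : ℕ} (hn : 2 ≤ n) (h0n : 0 < n) {η : (Fin n → W) → A}
    (hc : IsCocycle n η) (hcol : Collapsing cs n η)
    (hdiag : ∀ i : B, η (fun _ => cs.simple i) = 0)
    (NB : ℕ) (hIH : ∀ z : Fin n → W, (∑ i, cs.length (z i)) < NB → η z = 0) :
    ∀ (L : ℕ) (y : Fin n → W), cs.length (y ⟨0, h0n⟩) ≤ L →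
      (∑ i, cs.length (y i)) ≤ NB → η y = 0 := by
  have h1n : 1 < n := hn
  intro L
  induction L with
  | zero =>
    intro y hy _
    exact vanish_one hcol y 0 h0n h1n (cs.length_eq_zero_iff.mp (Nat.le_zero.mp hy))
  | succ L IH =>
    intro y hy hNB
    by_cases hL : cs.length (y ⟨0, h0n⟩) ≤ L
    · exact IH y hL hNB
    by_cases h1 : cs.length (y ⟨0, h0n⟩) = 1
    · exact step2 hn h0n hc hcol hdiag y h1
    have hge2 : 2 ≤ cs.length (y ⟨0, h0n⟩) := by
      rcases Nat.eq_zero_or_pos (cs.length (y ⟨0, h0n⟩)) with h | h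
      · omega
      · omega
    have hne1 : y ⟨0, h0n⟩ ≠ 1 := by
      intro e
      rw [e, cs.length_one] at hge2
      omega
    obtain ⟨i₀, hdes⟩ := cs.exists_rightDescent_of_ne_one hne1
    have hdes' : cs.length (y ⟨0, h0n⟩ * cs.simple i₀) + 1 = cs.length (y ⟨0, h0n⟩) :=
      cs.isRightDescent_iff.mp hdes
    set xx : Fin (n + 1) → W := fun i =>
      if (i : ℕ) = 0 then y ⟨0, h0n⟩ * cs.simple i₀
      else if (i : ℕ) = 1 then cs.simple i₀
      else y ⟨(i : ℕ) - 1, by have := i.isLt; omega⟩ with hxx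
    have hx0 : ∀ (c : ℕ) (hcn : c < n + 1), c = 0 →
        xx ⟨c, hcn⟩ = y ⟨0, h0n⟩ * cs.simple i₀ := by
      intro c hcn hcm
      rw [hxx]
      simp only [Fin.val_mk]
      rw [if_pos hcm]
    have hx1 : ∀ (c : ℕ) (hcn : c < n + 1), c = 1 → xx ⟨c, hcn⟩ = cs.simple i₀ := by
      intro c hcn hcm
      rw [hxx]
      simp only [Fin.val_mk]
      rw [if_neg (by omega), if_pos hcm]
    have hxhigh : ∀ (c : ℕ) (hcn : c < n + 1) (hcn' : c - 1 < n), 2 ≤ c →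
        xx ⟨c, hcn⟩ = y ⟨c - 1, hcn'⟩ := by
      intro c hcn hcn' hcm
      rw [hxx]
      simp only [Fin.val_mk]
      rw [if_neg (by omega), if_neg (by omega)]
    have pa0 : (0 : ℕ) < n + 1 := Nat.succ_pos n
    have pa1 : 1 < n + 1 := Nat.succ_lt_succ h0n
    have pa2 : 2 < n + 1 := Nat.succ_lt_succ h1n
    have hadd' : cs.length (xx ⟨0, pa0⟩ * xx ⟨1, pa1⟩) =
        cs.length (xx ⟨0, pa0⟩) + cs.length (xx ⟨1, pa1⟩) := by
      rw [hx0 0 pa0 rfl, hx1 1 pa1 rfl, cs.simple_mul_simple_cancel_right,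
        cs.length_simple]
      omega
    have hph := phase1 hn hc hcol xx pa0 pa1 hadd' h0n h1n
    have hc0 : contract xx ⟨0, h0n⟩ = y := by
      funext i
      obtain ⟨iv, hiv⟩ := i
      rcases Nat.eq_zero_or_pos iv with hz | hpos
      · subst hz
        rw [contract_entry_eq xx _ 0 hiv rfl pa0 pa1, hx0 0 pa0 rfl, hx1 (0 + 1) pa1 rfl,
          cs.simple_mul_simple_cancel_right]
      · rw [contract_entry_gt xx _ iv hiv (by simp only [Fin.val_mk]; omega)
          (Nat.succ_lt_succ hiv), hxhigh (iv + 1) (Nat.succ_lt_succ hiv) hiv (by omega)]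
        exact rfl
    -- the two remaining tuples
    have hsplit : ∀ g : Fin n → ℕ, ∑ i, g i
        = g ⟨0, h0n⟩ + ∑ i ∈ Finset.univ.erase ⟨0, h0n⟩, g i :=
      fun g => (Finset.add_sum_erase _ g (Finset.mem_univ _)).symm
    have hw1 : η (xx ∘ Fin.succ) = 0 := by
      apply hIH
      have he : ∀ i ∈ Finset.univ.erase (⟨0, h0n⟩ : Fin n),
          cs.length ((xx ∘ Fin.succ) i) = cs.length (y i) := by
        intro i hi
        obtain ⟨iv, hiv⟩ := i
        have hiv0 : 0 < iv := by
          rcases Finset.mem_erase.mp hi with ⟨hne, _⟩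
          simp only [ne_eq, Fin.ext_iff, Fin.val_mk] at hne
          omega
        simp only [Function.comp_apply, Fin.succ_mk]
        rw [hxhigh (iv + 1) (Nat.succ_lt_succ hiv) hiv (by omega)]
        exact rfl
      have h10 : cs.length ((xx ∘ Fin.succ) ⟨0, h0n⟩) = 1 := by
        simp only [Function.comp_apply, Fin.succ_mk]
        rw [hx1 (0 + 1) pa1 rfl, cs.length_simple]
      have e1 : ∑ i, cs.length ((xx ∘ Fin.succ) i)
          = 1 + ∑ i ∈ Finset.univ.erase ⟨0, h0n⟩, cs.length (y i) := by
        rw [hsplit (fun i => cs.length ((xx ∘ Fin.succ) i)), h10,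
          Finset.sum_congr rfl he]
      have e2 : ∑ i, cs.length (y i)
          = cs.length (y ⟨0, h0n⟩) + ∑ i ∈ Finset.univ.erase ⟨0, h0n⟩, cs.length (y i) :=
        hsplit _
      omega
    have hw2 : η (contract xx ⟨1, h1n⟩) = 0 := by
      apply IH
      · -- length of first entry dropped
        rw [contract_entry_lt xx _ 0 h0n (by simp only [Fin.val_mk]; omega) pa0,
          hx0 0 pa0 rfl]
        omega
      · -- total length bound
        have hsplit2 : ∀ g : Fin n → ℕ, ∑ i, g i
            = g ⟨0, h0n⟩ + (g ⟨1, h1n⟩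
              + ∑ i ∈ (Finset.univ.erase ⟨0, h0n⟩).erase ⟨1, h1n⟩, g i) := by
          intro g
          rw [Finset.add_sum_erase _ g
            (by simp [Finset.mem_erase, Fin.ext_iff] :
              (⟨1, h1n⟩ : Fin n) ∈ Finset.univ.erase ⟨0, h0n⟩)]
          exact hsplit g
        have he : ∀ i ∈ (Finset.univ.erase (⟨0, h0n⟩ : Fin n)).erase ⟨1, h1n⟩,
            cs.length (contract xx ⟨1, h1n⟩ i) = cs.length (y i) := by
          intro i hi
          obtain ⟨iv, hiv⟩ := i
          have hiv2 : 2 ≤ iv := by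
            rcases Finset.mem_erase.mp hi with ⟨hne1', hi'⟩
            rcases Finset.mem_erase.mp hi' with ⟨hne0', _⟩
            simp only [ne_eq, Fin.ext_iff, Fin.val_mk] at hne1' hne0'
            omega
          rw [contract_entry_gt xx _ iv hiv (by simp only [Fin.val_mk]; omega)
            (Nat.succ_lt_succ hiv), hxhigh (iv + 1) (Nat.succ_lt_succ hiv) hiv (by omega)]
          exact rfl
        have e0 : contract xx ⟨1, h1n⟩ ⟨0, h0n⟩ = y ⟨0, h0n⟩ * cs.simple i₀ := by
          rw [contract_entry_lt xx _ 0 h0n (by simp only [Fin.val_mk]; omega) pa0,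
            hx0 0 pa0 rfl]
        have e1 : contract xx ⟨1, h1n⟩ ⟨1, h1n⟩ = cs.simple i₀ * y ⟨1, h1n⟩ := by
          rw [contract_entry_eq xx _ 1 h1n rfl pa1 pa2, hx1 1 pa1 rfl,
            hxhigh (1 + 1) pa2 h1n (by omega)]
        have hmul := cs.length_mul_le (cs.simple i₀) (y ⟨1, h1n⟩)
        rw [cs.length_simple] at hmul
        have eA : ∑ i, cs.length (contract xx ⟨1, h1n⟩ i)
            = cs.length (y ⟨0, h0n⟩ * cs.simple i₀) + (cs.length (cs.simple i₀ * y ⟨1, h1n⟩)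
              + ∑ i ∈ (Finset.univ.erase ⟨0, h0n⟩).erase ⟨1, h1n⟩, cs.length (y i)) := by
          rw [hsplit2 (fun i => cs.length (contract xx ⟨1, h1n⟩ i)), e0, e1,
            Finset.sum_congr rfl he]
        have eB : ∑ i, cs.length (y i)
            = cs.length (y ⟨0, h0n⟩) + (cs.length (y ⟨1, h1n⟩)
              + ∑ i ∈ (Finset.univ.erase ⟨0, h0n⟩).erase ⟨1, h1n⟩, cs.length (y i)) :=
          hsplit2 _
        omega
    rw [hc0] at hph
    rw [hph, hw1, hw2, add_zero]

end Step1

section Unique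

variable {A : Type*} [AddCommGroup A] {cs : CoxeterSystem M W}

lemma unique_ge2 {n : ℕ} (hn : 2 ≤ n) {η : (Fin n → W) → A}
    (hc : IsCocycle n η) (hcol : Collapsing cs n η)
    (hdiag : ∀ i : B, η (fun _ => cs.simple i) = 0) (y : Fin n → W) : η y = 0 := by
  have h0n : 0 < n := by omega
  have KEY : ∀ NB (z : Fin n → W), (∑ i, cs.length (z i)) ≤ NB → η z = 0 := by
    intro NB
    induction NB using Nat.strong_induction_on with
    | _ NB IH =>
    intro z hz
    exact step1 hn h0n hc hcol hdiag NB
      (fun w hw => IH (∑ i, cs.length (w i)) (by omega) w le_rfl)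
      (cs.length (z ⟨0, h0n⟩)) z le_rfl hz
  exact KEY _ y le_rfl

lemma unique_one {η : (Fin 1 → W) → A}
    (hc : IsCocycle 1 η) (hdiag : ∀ i : B, η (fun _ => cs.simple i) = 0)
    (y : Fin 1 → W) : η y = 0 := by
  have hg : ∀ a b : W, η (fun _ => a * b) = η (fun _ => a) + η (fun _ => b) := by
    intro a b
    have h := hc ![a, b]
    rw [Fin.sum_univ_one] at h
    have h1 : (![a, b] : Fin 2 → W) ∘ Fin.succ = fun _ : Fin 1 => b := by
      funext i
      rw [Subsingleton.elim i 0]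
      rfl
    have h2 : (![a, b] : Fin 2 → W) ∘ Fin.castSucc = fun _ : Fin 1 => a := by
      funext i
      rw [Subsingleton.elim i 0]
      rfl
    have h3 : contract (![a, b] : Fin 2 → W) 0 = fun _ : Fin 1 => a * b := by
      funext i
      rw [Subsingleton.elim i 0]
      rfl
    rw [h1, h2, h3] at h
    norm_num at h
    calc η (fun _ => a * b)
        = η (fun _ => a * b)
          + (η (fun _ : Fin 1 => b) + -η (fun _ : Fin 1 => a * b) + η (fun _ : Fin 1 => a)) := by
          rw [h, add_zero]
      _ = η (fun _ => a) + η (fun _ => b) := by abel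
  have hlen : ∀ (L : ℕ) (w : W), cs.length w ≤ L → η (fun _ => w) = 0 := by
    intro L
    induction L with
    | zero =>
      intro w hw
      have hw1 : w = 1 := cs.length_eq_zero_iff.mp (Nat.le_zero.mp hw)
      subst hw1
      have h11 := hg 1 1
      rw [mul_one] at h11
      exact left_eq_add.mp h11
    | succ L IH =>
      intro w hw
      by_cases hL : cs.length w ≤ L
      · exact IH w hL
      have hne : w ≠ 1 := by
        intro e
        subst e
        rw [cs.length_one] at hL
        omega
      obtain ⟨i₀, hdes⟩ := cs.exists_rightDescent_of_ne_one hne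
      have hdes' := cs.isRightDescent_iff.mp hdes
      have hrec := hg (w * cs.simple i₀) (cs.simple i₀)
      rw [cs.simple_mul_simple_cancel_right] at hrec
      rw [hrec, IH (w * cs.simple i₀) (by omega), hdiag i₀, add_zero]
  have hconst : y = fun _ => y 0 := by
    funext i
    rw [Subsingleton.elim i 0]
  rw [hconst]
  exact hlen (cs.length (y 0)) (y 0) le_rfl

lemma eps_unique {n : ℕ} (hn : 1 ≤ n) {η : (Fin n → W) → A}
    (hc : IsCocycle n η) (hcol : Collapsing cs n η)
    (hdiag : ∀ i : B, η (fun _ => cs.simple i) = 0) (y : Fin n → W) : η y = 0 := by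
  rcases eq_or_lt_of_le hn with h1 | h2
  · subst h1
    exact unique_one hc hdiag y
  · exact unique_ge2 h2 hc hcol hdiag y

end Unique

section Restrict

lemma eps_restrict (cs : CoxeterSystem M W)
    {B' W' : Type*} [Group W'] {M' : CoxeterMatrix B'} (cs' : CoxeterSystem M' W')
    (f : W' →* W) (ι : B' → B)
    (hf : ∀ i : B', f (cs'.simple i) = cs.simple (ι i))
    (hlen : ∀ w : W', cs.length (f w) = cs'.length w)
    (n : ℕ) (hn : 1 ≤ n)
    {A : Type*} [AddCommGroup A] [One A]
    (ζ : (Fin n → W) → A) (ζ' : (Fin n → W') → A)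
    (hζ : IsEps cs n ζ) (hζ' : IsEps cs' n ζ')
    (x : Fin n → W') : ζ (fun k => f (x k)) = ζ' x := by
  set η : (Fin n → W') → A := fun z => ζ (fun k => f (z k)) - ζ' z with hη
  have hthree : ∀ (a1 b1 a2 b2 a3 b3 : A), a1 + a2 + a3 = 0 → b1 + b2 + b3 = 0 →
      (a1 - b1) + (a2 - b2) + (a3 - b3) = 0 := by
    intro a1 b1 a2 b2 a3 b3 hA hB
    rw [sub_add_sub_comm, sub_add_sub_comm, hA, hB]
    simp
  have hcoc : IsCocycle n η := by
    intro xx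
    have hA := hζ.1 (fun i => f (xx i))
    have hB := hζ'.1 xx
    have hcomm : ∀ j : Fin n,
        (fun k => f (contract xx j k)) = contract (fun i => f (xx i)) j := by
      intro j
      funext i
      simp only [contract]
      split_ifs <;> simp [map_mul]
    have e3 : ∀ j : Fin n, η (contract xx j)
        = ζ (contract (fun i => f (xx i)) j) - ζ' (contract xx j) := by
      intro j
      rw [hη]
      dsimp only
      rw [hcomm j]
    have e1 : η (xx ∘ Fin.succ)
        = ζ ((fun i => f (xx i)) ∘ Fin.succ) - ζ' (xx ∘ Fin.succ) := rfl
    have e2 : η (xx ∘ Fin.castSucc)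
        = ζ ((fun i => f (xx i)) ∘ Fin.castSucc) - ζ' (xx ∘ Fin.castSucc) := rfl
    rw [e1, e2]
    simp only [e3, smul_sub]
    rw [Finset.sum_sub_distrib]
    exact hthree _ _ _ _ _ _ hA hB
  have hcol : Collapsing cs' n η := by
    intro z i hi hadd
    have hz1 : ζ (fun k => f (z k)) = 0 := by
      apply hζ.2.1 (fun k => f (z k)) i hi
      rw [← map_mul, hlen, hlen, hlen]
      exact hadd
    have hz2 : ζ' z = 0 := hζ'.2.1 z i hi hadd
    rw [hη]
    dsimp only
    rw [hz1, hz2, sub_zero]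
  have hdg : ∀ i' : B', η (fun _ => cs'.simple i') = 0 := by
    intro i'
    rw [hη]
    dsimp only
    have hff : (fun _ : Fin n => f (cs'.simple i')) = fun _ : Fin n => cs.simple (ι i') := by
      funext k
      rw [hf]
    rw [hff, hζ.2.2 (ι i'), hζ'.2.2 i', sub_self]
  have hz := eps_unique hn hcoc hcol hdg x
  rw [hη] at hz
  dsimp only at hz
  exact sub_eq_zero.mp hz

end Restrict

end EpsPriv

/-- Restriction to a standard parabolic subgroup: let `(W', S')` be a Coxeter system
together with an injective homomorphism `f : W' → W` sending the simple reflections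
`S'` injectively into `S` (so `f(W')` is a standard parabolic subgroup of `W`), whose
length function is the restriction of that of `W`.  Then `εₙ^W` restricted to `W'`
equals `εₙ^{W'}`, where each `εₙ` is characterized as the unique collapsing
`n`-cocycle (trivial coefficients: `ℤ` for `n` even, `𝔽₂` for `n` odd) taking the
value `1` on `(s, …, s)` for simple `s`. -/
theorem eps_parabolic_restriction (cs : CoxeterSystem M W)
    {B' W' : Type*} [Group W'] {M' : CoxeterMatrix B'} (cs' : CoxeterSystem M' W')
    (f : W' →* W) (hfinj : Function.Injective f)
    (ι : B' → B) (hιinj : Function.Injective ι)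
    (hf : ∀ i : B', f (cs'.simple i) = cs.simple (ι i))
    (hlen : ∀ w : W', cs.length (f w) = cs'.length w)
    (n : ℕ) (hn : 1 ≤ n) :
    (Even n → ∀ (ζ : (Fin n → W) → ℤ) (ζ' : (Fin n → W') → ℤ),
      IsEps cs n ζ → IsEps cs' n ζ' →
        ∀ x : Fin n → W', ζ (fun k => f (x k)) = ζ' x) ∧
    (Odd n → ∀ (ζ : (Fin n → W) → ZMod 2) (ζ' : (Fin n → W') → ZMod 2),
      IsEps cs n ζ → IsEps cs' n ζ' →
        ∀ x : Fin n → W', ζ (fun k => f (x k)) = ζ' x) := by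
  constructor
  · intro _ ζ ζ' hζ hζ' x
    exact EpsPriv.eps_restrict cs cs' f ι hf hlen n hn ζ ζ' hζ hζ' x
  · intro _ ζ ζ' hζ hζ' x
    exact EpsPriv.eps_restrict cs cs' f ι hf hlen n hn ζ ζ' hζ hζ' x
end
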